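/- arXiv:1605.07254 — 3 statements merged into one kernel-verified Lean document; each statement's English description precedes it below -/
import Mathlib

section
/- Let (𝒳, Σ) be a measurable space, and let Q and P be probability measures on 𝒳 such that P has a density with respect to Q bounded by a constant R. Let (e_i)_{i∈ℕ} be measurable real-valued functions on 𝒳 forming an orthonormal system in L²(Q), and let μ_i ≥ 0 be reals such that Σ_i μ_i e_i(x)² < ∞ for every x ∈ 𝒳, ∫ Σ_i μ_i e_i(x)² dQ(x) < ∞, and, for a fixed constant 0 < θ ≤ 1, Σ_i μ_i^θ e_i(x)² < ∞ for every x. For each n ∈ ℕ let X_1^{(n)},…,X_n^{(n)} : Ω → 𝒳 be random points and w_1^{(n)},…,w_n^{(n)} : Ω → ℝ random weights on a probability space Ω (with all the random quantities below integrable), and define the worst-case error e_n(ω)² := Σ_i μ_i ( ∫ e_i dP − Σ_{j=1}^n w_j^{(n)}(ω) e_i(X_j^{(n)}(ω)) )². Assume: (i) for every g ∈ L²(Q), E[(1/n) Σ_{i=1}^n g(X_i^{(n)})²] ≤ D² ∫ g² dQ for a constant D > 0; (ii) there are constants C₁ > 0 and b > 0 with E[e_n] ≤ C₁ n^{−b}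 for all n; (iii) there are constants C₂ > 0 and 0 < c ≤ 1/2 with E[Σ_{j=1}^n (w_j^{(n)})²] ≤ C₂ n^{−2c} for all n. Let a ∈ ℓ²(ℕ) and let f(x) := Σ_i a_i μ_i^{θ/2} e_i(x) (the series converging absolutely at every x). Then there exists a constant C > 0 such that for all n ≥ 1, E[ | Σ_{j=1}^n w_j^{(n)} f(X_j^{(n)}) − ∫ f dP | ] ≤ C n^{−θ b + (1/2 − c)(1 − θ)}. -/
open MeasureTheory
open scoped ENNReal NNReal

set_option maxHeartbeats 1000000 in
/-- Theorem 1 of the paper, stated via a Mercer-type expansion: the RKHS `H` has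
orthonormal-basis coordinates `(μᵢ^{1/2} eᵢ)`, its `θ`-th power `H^θ` consists of the
functions `f = ∑ aᵢ μᵢ^{θ/2} eᵢ` with `a ∈ ℓ²`, and `eₙ(ω)` is the worst-case error
`‖m_P − m_{Pₙ}‖_H` expressed in these coordinates.  If the random points satisfy the
sampling condition with proposal `Q` (w.r.t. which `P` has a bounded density), the expected
worst-case error is `O(n^{−b})` and the expected squared-weight sum is `O(n^{−2c})`, then for
every `f ∈ H^θ` the expected integration error is `O(n^{−θb + (1/2−c)(1−θ)})`. -/
theorem kernel_quadrature_misspecified_random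
    {𝓧 : Type*} [MeasurableSpace 𝓧]
    (Q P : Measure 𝓧) [IsProbabilityMeasure Q] [IsProbabilityMeasure P]
    -- P has a density w.r.t. Q bounded by the constant R
    (R : ℝ≥0) (ρ : 𝓧 → ℝ≥0∞) (hρmeas : Measurable ρ)
    (hρbdd : ∀ x, ρ x ≤ R) (hPQ : P = Q.withDensity ρ)
    -- the Mercer system: orthonormal (eᵢ) in L²(Q) and nonnegative (μᵢ)
    (e : ℕ → 𝓧 → ℝ) (hemeas : ∀ i, Measurable (e i))
    (horth : ∀ i j, ∫ x, e i x * e j x ∂Q = if i = j then 1 else 0)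
    (μ : ℕ → ℝ) (hμ : ∀ i, 0 ≤ μ i)
    (hker : ∀ x, Summable fun i => μ i * (e i x) ^ 2)
    (hkerint : Integrable (fun x => ∑' i, μ i * (e i x) ^ 2) Q)
    (θ : ℝ) (hθ0 : 0 < θ) (hθ1 : θ ≤ 1)
    (hkerθ : ∀ x, Summable fun i => μ i ^ θ * (e i x) ^ 2)
    -- the random points and random weights
    {Ω : Type*} [MeasurableSpace Ω] (μΩ : Measure Ω) [IsProbabilityMeasure μΩ]
    (X : (n : ℕ) → Fin n → Ω → 𝓧) (hXmeas : ∀ n i, Measurable (X n i))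
    (w : (n : ℕ) → Fin n → Ω → ℝ) (hwmeas : ∀ n i, Measurable (w n i))
    -- the worst-case error eₙ(ω), defined by eₙ(ω)² = ∑ᵢ μᵢ (∫ eᵢ dP − ∑ⱼ wⱼ eᵢ(Xⱼ))²
    (en : ℕ → Ω → ℝ) (hen_nonneg : ∀ n ω, 0 ≤ en n ω)
    (hen_def : ∀ n ω, (en n ω) ^ 2 =
      ∑' i, μ i * ((∫ x, e i x ∂P) - ∑ j, w n j ω * e i (X n j ω)) ^ 2)
    -- (i) the sampling assumption
    (D : ℝ) (hD : 0 < D)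
    (hsamp : ∀ g : 𝓧 → ℝ, Measurable g → Integrable (fun x => (g x) ^ 2) Q →
      ∀ n : ℕ, 1 ≤ n → (∀ i, Integrable (fun ω => (g (X n i ω)) ^ 2) μΩ) →
        ∫ ω, (1 / (n : ℝ)) * ∑ i, (g (X n i ω)) ^ 2 ∂μΩ ≤
          D ^ 2 * ∫ x, (g x) ^ 2 ∂Q)
    -- (ii) the expected worst-case error decays as n^{−b}
    (b C₁ : ℝ) (hb : 0 < b) (hC₁ : 0 < C₁)
    (hen_int : ∀ n, Integrable (en n) μΩ)
    (hen_rate : ∀ n : ℕ, 1 ≤ n → ∫ ω, en n ω ∂μΩ ≤ C₁ * (n : ℝ) ^ (-b))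
    -- (iii) the expected squared-weight sum decays as n^{−2c}
    (c C₂ : ℝ) (hc0 : 0 < c) (hc : c ≤ 1 / 2) (hC₂ : 0 < C₂)
    (hw_int : ∀ n : ℕ, Integrable (fun ω => ∑ j, (w n j ω) ^ 2) μΩ)
    (hw_rate : ∀ n : ℕ, 1 ≤ n →
      ∫ ω, ∑ j, (w n j ω) ^ 2 ∂μΩ ≤ C₂ * (n : ℝ) ^ (-(2 * c)))
    -- the integrand f ∈ H^θ
    (a : ℕ → ℝ) (ha : Summable fun i => (a i) ^ 2)
    (f : 𝓧 → ℝ)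
    (hf_abs : ∀ x, Summable fun i => |a i * μ i ^ (θ / 2) * e i x|)
    (hf : ∀ x, f x = ∑' i, a i * μ i ^ (θ / 2) * e i x)
    (herr_int : ∀ n : ℕ, Integrable
      (fun ω => |(∑ j, w n j ω * f (X n j ω)) - ∫ x, f x ∂P|) μΩ) :
    ∃ C > 0, ∀ n : ℕ, 1 ≤ n →
      ∫ ω, |(∑ j, w n j ω * f (X n j ω)) - ∫ x, f x ∂P| ∂μΩ ≤
        C * (n : ℝ) ^ (-(θ * b) + (1 / 2 - c) * (1 - θ)) := by
  classical
  -- abbreviation for the squared-coefficient sum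
  set Sa : ℝ := ∑' i, (a i) ^ 2 with hSadef
  have hSa0 : 0 ≤ Sa := tsum_nonneg fun i => sq_nonneg _
  set K : ℝ := Real.sqrt Sa + 1 with hKdef
  have hK1 : 1 ≤ K := le_add_of_nonneg_left (Real.sqrt_nonneg _)
  have hK0 : 0 < K := lt_of_lt_of_le one_pos hK1
  have hKSa : Real.sqrt Sa ≤ K := le_add_of_nonneg_right one_pos.le
  have hKsq : Sa ≤ K ^ 2 := by
    have : Real.sqrt Sa ^ 2 ≤ K ^ 2 :=
      pow_le_pow_left₀ (Real.sqrt_nonneg _) hKSa 2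
    simpa [Real.sq_sqrt hSa0] using this
  -- each e i is square-integrable w.r.t. Q
  have he2int : ∀ i, Integrable (fun x => e i x ^ 2) Q := by
    intro i
    by_contra h
    have h' : ¬ Integrable (fun x => e i x * e i x) Q := by
      simpa [sq] using h
    have := horth i i
    rw [integral_undef h'] at this
    simp at this
  have he2 : ∀ i, ∫ x, e i x ^ 2 ∂Q = 1 := by
    intro i
    have := horth i i
    simpa [sq] using this
  have heeint : ∀ i j, Integrable (fun x => e i x * e j x) Q := by
    intro i j
    have hmeas : AEStronglyMeasurable (fun x => e i x * e j x) Q :=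
      ((hemeas i).mul (hemeas j)).aestronglyMeasurable
    refine Integrable.mono' (((he2int i).add (he2int j)).const_mul (1/2)) hmeas ?_
    filter_upwards with x
    show ‖e i x * e j x‖ ≤ 1/2 * (e i x ^ 2 + e j x ^ 2)
    have h1 : ‖e i x * e j x‖ = |e i x| * |e j x| := by
      rw [Real.norm_eq_abs, abs_mul]
    rw [h1]
    nlinarith [sq_nonneg (|e i x| - |e j x|), sq_abs (e i x), sq_abs (e j x),
      abs_nonneg (e i x), abs_nonneg (e j x)]
  -- Summable μ
  have hμsum : Summable μ := by
    apply summable_of_sum_le (fun i => hμ i)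
    intro s
    have h1 : ∑ i ∈ s, μ i = ∫ x, ∑ i ∈ s, μ i * e i x ^ 2 ∂Q := by
      rw [integral_finset_sum s (fun i _ => ((he2int i).const_mul (μ i)))]
      congr 1
      ext i
      rw [integral_const_mul, he2 i, mul_one]
    rw [h1]
    exact le_trans (integral_mono (integrable_finset_sum s
        (fun i _ => ((he2int i).const_mul (μ i)))) hkerint
        (fun x => Summable.sum_le_tsum s (fun i _ => mul_nonneg (hμ i) (sq_nonneg _)) (hker x)))
      (le_refl _)
  -- Integrability w.r.t. Q of each e i
  have habs_le : ∀ (t : ℝ) (x : ℝ), 0 < t → |x| ≤ (t + x ^ 2 / t) / 2 := by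
    intro t x ht
    have h : 2 * t * |x| ≤ t ^ 2 + x ^ 2 := by
      nlinarith [sq_nonneg (t - |x|), sq_abs x]
    rw [← sub_nonneg]
    have h2 : (t + x ^ 2 / t) / 2 - |x| = (t ^ 2 + x ^ 2 - 2 * t * |x|) / (2 * t) := by
      field_simp
    rw [h2]
    exact div_nonneg (by linarith) (by positivity)
  have heiQint : ∀ i, Integrable (e i) Q := by
    intro i
    refine Integrable.mono' (((he2int i).add (integrable_const 1)).const_mul (1/2))
      (hemeas i).aestronglyMeasurable ?_
    filter_upwards with x
    have h1 : |e i x| ≤ (1 + e i x ^ 2 / 1) / 2 := habs_le 1 _ one_pos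
    rw [div_one] at h1
    simp only [Pi.add_apply, Real.norm_eq_abs]
    nlinarith [h1]
  -- transfer of lintegrals from P to Q
  have hPQle : ∀ g : 𝓧 → ℝ, Measurable g →
      ∫⁻ x, ENNReal.ofReal (g x) ∂P ≤ (R : ℝ≥0∞) * ∫⁻ x, ENNReal.ofReal (g x) ∂Q := by
    intro g hg
    have hmg : Measurable fun x => ENNReal.ofReal (g x) :=
      ENNReal.measurable_ofReal.comp hg
    rw [hPQ, lintegral_withDensity_eq_lintegral_mul Q hρmeas hmg]
    calc ∫⁻ x, (ρ * fun x => ENNReal.ofReal (g x)) x ∂Q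
        ≤ ∫⁻ x, (R : ℝ≥0∞) * ENNReal.ofReal (g x) ∂Q := by
          apply lintegral_mono
          intro x
          exact mul_le_mul_left (hρbdd x) _
      _ = (R : ℝ≥0∞) * ∫⁻ x, ENNReal.ofReal (g x) ∂Q := lintegral_const_mul _ hmg
  have hPint : ∀ g : 𝓧 → ℝ, Measurable g → Integrable g Q → Integrable g P := by
    intro g hg hgQ
    constructor
    · exact hg.aestronglyMeasurable
    · rw [hasFiniteIntegral_iff_norm]
      calc ∫⁻ x, ENNReal.ofReal ‖g x‖ ∂P ≤ (R : ℝ≥0∞) * ∫⁻ x, ENNReal.ofReal ‖g x‖ ∂Q :=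
            hPQle _ hg.norm
        _ < ⊤ := by
            refine ENNReal.mul_lt_top ENNReal.coe_lt_top ?_
            rw [← hasFiniteIntegral_iff_norm]
            exact hgQ.hasFiniteIntegral
  have heiPint : ∀ i, Integrable (e i) P := fun i => hPint _ (hemeas i) (heiQint i)
  -- Bochner comparison of nonneg integrals
  have hintPQ : ∀ g : 𝓧 → ℝ, Measurable g → (∀ x, 0 ≤ g x) → Integrable g P →
      Integrable g Q → ∫ x, g x ∂P ≤ (R : ℝ) * ∫ x, g x ∂Q := by
    intro g hg hg0 hgP hgQ
    have h1 : ENNReal.ofReal (∫ x, g x ∂P) ≤ ENNReal.ofReal ((R:ℝ) * ∫ x, g x ∂Q) := by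
      rw [ofReal_integral_eq_lintegral_ofReal hgP (Filter.Eventually.of_forall hg0),
        ENNReal.ofReal_mul R.coe_nonneg,
        ofReal_integral_eq_lintegral_ofReal hgQ (Filter.Eventually.of_forall hg0)]
      simpa [ENNReal.ofReal_coe_nnreal] using hPQle g hg
    have h2 := ENNReal.toReal_mono ENNReal.ofReal_ne_top h1
    rwa [ENNReal.toReal_ofReal (integral_nonneg hg0),
      ENNReal.toReal_ofReal (mul_nonneg R.coe_nonneg (integral_nonneg hg0))] at h2
  -- bound on the means of e i under P
  have heiP_bd : ∀ i, |∫ x, e i x ∂P| ≤ (R : ℝ) := by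
    intro i
    have h1 : |∫ x, e i x ∂P| ≤ ∫ x, |e i x| ∂P := by
      simpa using norm_integral_le_integral_norm (μ := P) (e i)
    have h2 : ∫ x, |e i x| ∂P ≤ (R : ℝ) * ∫ x, |e i x| ∂Q :=
      hintPQ _ (hemeas i).abs (fun x => abs_nonneg _) (heiPint i).abs (heiQint i).abs
    have h3 : ∫ x, |e i x| ∂Q ≤ 1 := by
      have hb : ∀ x, |e i x| ≤ (1 + e i x ^ 2 / 1) / 2 := fun x => habs_le 1 _ one_pos
      calc ∫ x, |e i x| ∂Q ≤ ∫ x, (1 + e i x ^ 2 / 1) / 2 ∂Q :=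
            integral_mono (heiQint i).abs
              (by exact (((integrable_const (1:ℝ)).add ((he2int i).div_const 1)).div_const 2)) hb
        _ = 1 := by
            simp only [div_one]
            rw [integral_div, integral_add (integrable_const 1) (he2int i),
              integral_const, he2 i]
            simp
    calc |∫ x, e i x ∂P| ≤ (R:ℝ) * ∫ x, |e i x| ∂Q := h1.trans h2
      _ ≤ (R:ℝ) * 1 := by
          exact mul_le_mul_of_nonneg_left h3 R.coe_nonneg
      _ = (R:ℝ) := mul_one _
  -- measurability of f
  have hfmeas : Measurable f := by
    have : ∀ x, Filter.Tendsto (fun m => ∑ i ∈ Finset.range m, a i * μ i ^ (θ/2) * e i x)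
        Filter.atTop (nhds (f x)) := by
      intro x
      rw [hf x]
      exact ((hf_abs x).of_abs).hasSum.tendsto_sum_nat
    refine measurable_of_tendsto_metrizable
      (f := fun m x => ∑ i ∈ Finset.range m, a i * μ i ^ (θ/2) * e i x)
      (fun m => Finset.measurable_sum _ (fun i _ => ((hemeas i).const_mul _))) ?_
    rw [tendsto_pi_nhds]
    exact this
  -- the constant
  refine ⟨K * (C₁ + Real.sqrt C₂ * D + (R:ℝ)), by positivity, ?_⟩
  intro n hn
  have npos : (0:ℝ) < n := by exact_mod_cast hn
  have hn1 : (1:ℝ) ≤ n := by exact_mod_cast hn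
  set β : ℝ := 2*b + 1 - 2*c with hβdef
  have hβ0 : 0 < β := by linarith
  set δ : ℝ := (n:ℝ) ^ (-β) with hδdef
  have hδ0 : 0 < δ := Real.rpow_pos_of_pos npos _
  -- the finite set of large eigenvalues
  have hfin : {i | δ ≤ μ i}.Finite := by
    have h0 : Filter.Tendsto μ Filter.atTop (nhds 0) := hμsum.tendsto_atTop_zero
    have h1 : ∀ᶠ i in Filter.atTop, μ i < δ := h0.eventually (gt_mem_nhds hδ0)
    rw [← Nat.cofinite_eq_atTop, Filter.eventually_cofinite] at h1
    convert h1 using 1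
    ext i
    simp [not_lt]
  set S : Finset ℕ := hfin.toFinset with hSdef
  have hmemS : ∀ i, i ∈ S ↔ δ ≤ μ i := by
    intro i
    rw [hSdef, Set.Finite.mem_toFinset]
    rfl
  -- coefficients and the two pieces of f
  obtain ⟨gc, hgcdef⟩ : ∃ gc : ℕ → ℝ, ∀ i, gc i = a i * μ i ^ (θ/2) :=
    ⟨_, fun _ => rfl⟩
  obtain ⟨f₁, hf₁def⟩ : ∃ f₁ : 𝓧 → ℝ, ∀ x, f₁ x = ∑ i ∈ S, gc i * e i x :=
    ⟨_, fun _ => rfl⟩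
  obtain ⟨f₂, hf₂def⟩ : ∃ f₂ : 𝓧 → ℝ, ∀ x, f₂ x = f x - f₁ x :=
    ⟨_, fun _ => rfl⟩
  have hf₁meas : Measurable f₁ := by
    have : f₁ = fun x => ∑ i ∈ S, gc i * e i x := funext hf₁def
    rw [this]
    exact Finset.measurable_sum _ (fun i _ => (hemeas i).const_mul _)
  have hf₂meas : Measurable f₂ := by
    have : f₂ = fun x => f x - f₁ x := funext hf₂def
    rw [this]
    exact hfmeas.sub hf₁meas
  -- rpow facts
  have hrpow2 : ∀ x : ℝ, 0 ≤ x → (x ^ (θ/2))^2 = x ^ θ := by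
    intro x hx
    rw [← Real.rpow_natCast (x ^ (θ/2)) 2, ← Real.rpow_mul hx]
    norm_num
  -- the error functional for f₁
  obtain ⟨T, hTdef⟩ : ∃ T : ℕ → Ω → ℝ, ∀ i ω,
      T i ω = (∫ x, e i x ∂P) - ∑ j, w n j ω * e i (X n j ω) := ⟨_, fun _ _ => rfl⟩
  have herr1_eq : ∀ ω, (∑ j, w n j ω * f₁ (X n j ω)) - ∫ x, f₁ x ∂P
      = - ∑ i ∈ S, gc i * T i ω := by
    intro ω
    have h1 : (∑ j, w n j ω * f₁ (X n j ω))
        = ∑ i ∈ S, gc i * ∑ j, w n j ω * e i (X n j ω) := by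
      simp only [hf₁def, Finset.mul_sum]
      rw [Finset.sum_comm]
      apply Finset.sum_congr rfl
      intro i _
      apply Finset.sum_congr rfl
      intro j _
      ring
    have h2 : ∫ x, f₁ x ∂P = ∑ i ∈ S, gc i * ∫ x, e i x ∂P := by
      have hfe : f₁ = fun x => ∑ i ∈ S, gc i * e i x := funext hf₁def
      rw [hfe]
      rw [integral_finset_sum S (fun i _ => ((heiPint i).const_mul (gc i)))]
      apply Finset.sum_congr rfl
      intro i _
      rw [integral_const_mul]
    rw [h1, h2, ← Finset.sum_sub_distrib, ← Finset.sum_neg_distrib]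
    apply Finset.sum_congr rfl
    intro i _
    rw [hTdef]
    ring
  -- summability of μ i * T i ω ^ 2
  have hμT_sum : ∀ ω, Summable (fun i => μ i * T i ω ^ 2) := by
    intro ω
    have hmaj : Summable (fun i =>
        2 * (R:ℝ)^2 * μ i +
        2 * (∑ j, w n j ω ^ 2) * ∑ j, μ i * e i (X n j ω) ^ 2) := by
      apply Summable.add
      · exact hμsum.mul_left _
      · apply Summable.mul_left
        exact summable_sum (fun j _ => hker (X n j ω))
    apply Summable.of_nonneg_of_le (fun i => mul_nonneg (hμ i) (sq_nonneg _)) ?_ hmaj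
    intro i
    have hT2 : T i ω ^ 2 ≤ 2 * (∫ x, e i x ∂P)^2 + 2 * (∑ j, w n j ω * e i (X n j ω))^2 := by
      rw [hTdef]
      nlinarith [sq_nonneg ((∫ x, e i x ∂P) + ∑ j, w n j ω * e i (X n j ω))]
    have hCS : (∑ j, w n j ω * e i (X n j ω))^2
        ≤ (∑ j, w n j ω ^ 2) * ∑ j, e i (X n j ω) ^ 2 :=
      Finset.sum_mul_sq_le_sq_mul_sq Finset.univ _ _
    have hP2 : (∫ x, e i x ∂P)^2 ≤ (R:ℝ)^2 := by
      have := heiP_bd i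
      nlinarith [abs_nonneg (∫ x, e i x ∂P), sq_abs (∫ x, e i x ∂P)]
    have hw0 : 0 ≤ ∑ j, w n j ω ^ 2 := Finset.sum_nonneg (fun j _ => sq_nonneg _)
    have he0 : 0 ≤ ∑ j, e i (X n j ω) ^ 2 := Finset.sum_nonneg (fun j _ => sq_nonneg _)
    calc μ i * T i ω ^ 2
        ≤ μ i * (2 * (R:ℝ)^2 + 2 * ((∑ j, w n j ω ^ 2) * ∑ j, e i (X n j ω) ^ 2)) := by
          apply mul_le_mul_of_nonneg_left _ (hμ i)
          nlinarith
      _ = 2 * (R:ℝ)^2 * μ i + 2 * (∑ j, w n j ω ^ 2) * ∑ j, μ i * e i (X n j ω) ^ 2 := by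
          rw [← Finset.mul_sum]
          ring
  -- Cauchy–Schwarz bound for the f₁ error
  have herr1_bd : ∀ ω, |(∑ j, w n j ω * f₁ (X n j ω)) - ∫ x, f₁ x ∂P|
      ≤ (Real.sqrt Sa * δ ^ ((θ-1)/2)) * en n ω := by
    intro ω
    rw [herr1_eq ω, abs_neg]
    have hCS : (∑ i ∈ S, gc i * T i ω)^2
        ≤ (∑ i ∈ S, a i ^ 2 * μ i ^ (θ-1)) * (∑ i ∈ S, μ i * T i ω ^ 2) := by
      have key := Finset.sum_mul_sq_le_sq_mul_sq S
        (fun i => a i * μ i ^ ((θ-1)/2)) (fun i => μ i ^ ((1:ℝ)/2) * T i ω)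
      have hL : ∀ i ∈ S, (a i * μ i ^ ((θ-1)/2)) * (μ i ^ ((1:ℝ)/2) * T i ω)
          = gc i * T i ω := by
        intro i hi
        have hμpos : 0 < μ i := lt_of_lt_of_le hδ0 ((hmemS i).1 hi)
        have : μ i ^ ((θ-1)/2) * μ i ^ ((1:ℝ)/2) = μ i ^ (θ/2) := by
          rw [← Real.rpow_add hμpos]
          congr 1
          ring
        rw [hgcdef]
        calc (a i * μ i ^ ((θ-1)/2)) * (μ i ^ ((1:ℝ)/2) * T i ω)
            = a i * (μ i ^ ((θ-1)/2) * μ i ^ ((1:ℝ)/2)) * T i ω := by ring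
          _ = a i * μ i ^ (θ/2) * T i ω := by rw [this]
      have hsq1 : ∀ i ∈ S, (a i * μ i ^ ((θ-1)/2))^2 = a i ^ 2 * μ i ^ (θ-1) := by
        intro i hi
        have hμpos : 0 < μ i := lt_of_lt_of_le hδ0 ((hmemS i).1 hi)
        rw [mul_pow, ← Real.rpow_natCast (μ i ^ ((θ-1)/2)) 2, ← Real.rpow_mul (hμ i)]
        norm_num
      have hsq2 : ∀ i ∈ S, (μ i ^ ((1:ℝ)/2) * T i ω)^2 = μ i * T i ω ^ 2 := by
        intro i hi
        rw [mul_pow, ← Real.rpow_natCast (μ i ^ ((1:ℝ)/2)) 2, ← Real.rpow_mul (hμ i)]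
        norm_num
      rw [Finset.sum_congr rfl hL, Finset.sum_congr rfl hsq1, Finset.sum_congr rfl hsq2] at key
      exact key
    have h1 : ∑ i ∈ S, a i ^ 2 * μ i ^ (θ-1) ≤ Sa * δ ^ (θ-1) := by
      have hδp : ∀ i ∈ S, μ i ^ (θ-1) ≤ δ ^ (θ-1) := by
        intro i hi
        exact Real.rpow_le_rpow_of_nonpos hδ0 ((hmemS i).1 hi) (by linarith)
      calc ∑ i ∈ S, a i ^ 2 * μ i ^ (θ-1)
          ≤ ∑ i ∈ S, a i ^ 2 * δ ^ (θ-1) := by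
            apply Finset.sum_le_sum
            intro i hi
            exact mul_le_mul_of_nonneg_left (hδp i hi) (sq_nonneg _)
        _ = (∑ i ∈ S, a i ^ 2) * δ ^ (θ-1) := by rw [← Finset.sum_mul]
        _ ≤ Sa * δ ^ (θ-1) := by
            apply mul_le_mul_of_nonneg_right _ (Real.rpow_nonneg hδ0.le _)
            exact Summable.sum_le_tsum S (fun i _ => sq_nonneg _) ha
    have h2 : ∑ i ∈ S, μ i * T i ω ^ 2 ≤ en n ω ^ 2 := by
      rw [hen_def n ω]
      have hrw : (fun i => μ i * ((∫ x, e i x ∂P) - ∑ j, w n j ω * e i (X n j ω)) ^ 2)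
          = fun i => μ i * T i ω ^ 2 := by
        funext i
        rw [hTdef]
      rw [hrw]
      exact Summable.sum_le_tsum S (fun i _ => mul_nonneg (hμ i) (sq_nonneg _)) (hμT_sum ω)
    have hnn1 : (0:ℝ) ≤ Sa * δ ^ (θ-1) := mul_nonneg hSa0 (Real.rpow_nonneg hδ0.le _)
    have hnn2 : (0:ℝ) ≤ ∑ i ∈ S, μ i * T i ω ^ 2 :=
      Finset.sum_nonneg (fun i _ => mul_nonneg (hμ i) (sq_nonneg _))
    have hfinal : (∑ i ∈ S, gc i * T i ω)^2 ≤ (Sa * δ ^ (θ-1)) * en n ω ^ 2 :=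
      hCS.trans (mul_le_mul h1 h2 hnn2 hnn1)
    have habs : |∑ i ∈ S, gc i * T i ω| = Real.sqrt ((∑ i ∈ S, gc i * T i ω)^2) :=
      (Real.sqrt_sq_eq_abs _).symm
    rw [habs]
    calc Real.sqrt ((∑ i ∈ S, gc i * T i ω)^2)
        ≤ Real.sqrt ((Sa * δ ^ (θ-1)) * en n ω ^ 2) := Real.sqrt_le_sqrt hfinal
      _ = Real.sqrt Sa * δ ^ ((θ-1)/2) * en n ω := by
          rw [Real.sqrt_mul hnn1, Real.sqrt_mul hSa0, Real.sqrt_sq (hen_nonneg n ω)]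
          congr 2
          rw [Real.sqrt_eq_rpow, ← Real.rpow_mul hδ0.le]
          congr 1
          ring
  -- integral bound for the f₁ error
  have herr1_meas : Measurable (fun ω => (∑ j, w n j ω * f₁ (X n j ω)) - ∫ x, f₁ x ∂P) := by
    apply Measurable.sub _ measurable_const
    exact Finset.measurable_sum _ (fun j _ => (hwmeas n j).mul (hf₁meas.comp (hXmeas n j)))
  have herr1_int : Integrable (fun ω => (∑ j, w n j ω * f₁ (X n j ω)) - ∫ x, f₁ x ∂P) μΩ := by
    refine Integrable.mono' ((hen_int n).const_mul (Real.sqrt Sa * δ ^ ((θ-1)/2)))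
      herr1_meas.aestronglyMeasurable ?_
    filter_upwards with ω
    rw [Real.norm_eq_abs]
    exact herr1_bd ω
  have herr1_ibd : ∫ ω, |(∑ j, w n j ω * f₁ (X n j ω)) - ∫ x, f₁ x ∂P| ∂μΩ
      ≤ (Real.sqrt Sa * δ ^ ((θ-1)/2)) * (C₁ * (n:ℝ) ^ (-b)) := by
    have hc0' : 0 ≤ Real.sqrt Sa * δ ^ ((θ-1)/2) :=
      mul_nonneg (Real.sqrt_nonneg _) (Real.rpow_nonneg hδ0.le _)
    calc ∫ ω, |(∑ j, w n j ω * f₁ (X n j ω)) - ∫ x, f₁ x ∂P| ∂μΩ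
        ≤ ∫ ω, (Real.sqrt Sa * δ ^ ((θ-1)/2)) * en n ω ∂μΩ :=
          integral_mono herr1_int.abs ((hen_int n).const_mul _) (fun ω => herr1_bd ω)
      _ = (Real.sqrt Sa * δ ^ ((θ-1)/2)) * ∫ ω, en n ω ∂μΩ := integral_const_mul _ _
      _ ≤ (Real.sqrt Sa * δ ^ ((θ-1)/2)) * (C₁ * (n:ℝ) ^ (-b)) :=
          mul_le_mul_of_nonneg_left (hen_rate n hn) hc0'
  -- the tail coefficients
  obtain ⟨cc, hccdef⟩ : ∃ cc : ℕ → ℝ, ∀ i, cc i = if i ∈ S then 0 else gc i :=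
    ⟨_, fun _ => rfl⟩
  have hccsq : ∀ i, cc i ^ 2 ≤ δ ^ θ * a i ^ 2 := by
    intro i
    rw [hccdef]
    split_ifs with hi
    · simpa using mul_nonneg (Real.rpow_nonneg hδ0.le θ) (sq_nonneg (a i))
    · rw [hgcdef, mul_pow, hrpow2 _ (hμ i)]
      have hμlt : μ i ≤ δ := le_of_lt (lt_of_not_ge (fun hge => hi ((hmemS i).2 hge)))
      have h2 : μ i ^ θ ≤ δ ^ θ := Real.rpow_le_rpow (hμ i) hμlt hθ0.le
      nlinarith [sq_nonneg (a i), Real.rpow_nonneg (hμ i) θ]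
  have hgsum : ∀ x, Summable (fun i => gc i * e i x) := by
    intro x
    have h := (hf_abs x).of_abs
    have h2 : (fun i => a i * μ i ^ (θ/2) * e i x) = fun i => gc i * e i x := by
      funext i
      rw [hgcdef]
    rwa [h2] at h
  have hccsum : ∀ x, Summable (fun i => cc i * e i x) := by
    intro x
    apply Summable.of_abs
    apply Summable.of_nonneg_of_le (fun i => abs_nonneg _) _ (hf_abs x)
    intro i
    rw [hccdef]
    split_ifs with hi
    · simp [abs_nonneg]; positivity
    · rw [hgcdef]
  have hf₂rep : ∀ x, f₂ x = ∑' i, cc i * e i x := by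
    intro x
    have hite_sum : Summable (fun i => if i ∈ S then gc i * e i x else 0) :=
      summable_of_ne_finset_zero (s := S) (fun i hi => if_neg hi)
    have hsplit : ∀ i : ℕ, a i * μ i ^ (θ/2) * e i x
        = (if i ∈ S then gc i * e i x else 0) + cc i * e i x := by
      intro i
      rw [hccdef, hgcdef]
      split_ifs with hi
      · simp
      · simp
    rw [hf₂def, hf x, hf₁def, tsum_congr hsplit, Summable.tsum_add hite_sum (hccsum x),
      tsum_eq_sum (s := S) (fun i hi => if_neg hi)]
    have : ∑ i ∈ S, (if i ∈ S then gc i * e i x else 0) = ∑ i ∈ S, gc i * e i x :=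
      Finset.sum_congr rfl (fun i hi => if_pos hi)
    rw [this]
    ring
  -- partial sums of the tail
  have hpt : ∀ x, Filter.Tendsto (fun m => ∑ i ∈ Finset.range m, cc i * e i x)
      Filter.atTop (nhds (f₂ x)) := by
    intro x
    rw [hf₂rep x]
    exact (hccsum x).hasSum.tendsto_sum_nat
  have hpmeas : ∀ m : ℕ, Measurable (fun x => ∑ i ∈ Finset.range m, cc i * e i x) :=
    fun m => Finset.measurable_sum _ (fun i _ => (hemeas i).const_mul _)
  have hexp : ∀ (m : ℕ) (x : 𝓧), (∑ i ∈ Finset.range m, cc i * e i x)^2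
      = ∑ i ∈ Finset.range m, ∑ j ∈ Finset.range m, (cc i * cc j) * (e i x * e j x) := by
    intro m x
    rw [sq, Finset.sum_mul_sum]
    exact Finset.sum_congr rfl (fun i _ => Finset.sum_congr rfl (fun j _ => by ring))
  have hpint : ∀ m : ℕ, Integrable (fun x => (∑ i ∈ Finset.range m, cc i * e i x)^2) Q := by
    intro m
    have h2 : (fun x => (∑ i ∈ Finset.range m, cc i * e i x)^2)
        = fun x => ∑ i ∈ Finset.range m, ∑ j ∈ Finset.range m, (cc i * cc j) * (e i x * e j x) :=
      funext (hexp m)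
    rw [h2]
    exact integrable_finset_sum _ (fun i _ =>
      integrable_finset_sum _ (fun j _ => (heeint i j).const_mul _))
  have hpval : ∀ m : ℕ, ∫ x, (∑ i ∈ Finset.range m, cc i * e i x)^2 ∂Q
      = ∑ i ∈ Finset.range m, cc i ^ 2 := by
    intro m
    have h2 : (fun x => (∑ i ∈ Finset.range m, cc i * e i x)^2)
        = fun x => ∑ i ∈ Finset.range m, ∑ j ∈ Finset.range m, (cc i * cc j) * (e i x * e j x) :=
      funext (hexp m)
    rw [h2, integral_finset_sum _ (fun i _ =>
      integrable_finset_sum _ (fun j _ => (heeint i j).const_mul _))]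
    apply Finset.sum_congr rfl
    intro i hi
    rw [integral_finset_sum _ (fun j _ => (heeint i j).const_mul _)]
    have h3 : ∀ j ∈ Finset.range m, ∫ x, (cc i * cc j) * (e i x * e j x) ∂Q
        = if i = j then cc i * cc j else 0 := by
      intro j _
      rw [integral_const_mul, horth i j]
      split_ifs <;> simp
    rw [Finset.sum_congr rfl h3, Finset.sum_ite_eq (Finset.range m) i (fun j => cc i * cc j),
      if_pos hi, sq]
  have hrange_bd : ∀ m : ℕ, ∑ i ∈ Finset.range m, cc i ^ 2 ≤ δ ^ θ * Sa := by
    intro m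
    calc ∑ i ∈ Finset.range m, cc i ^ 2
        ≤ ∑ i ∈ Finset.range m, δ ^ θ * a i ^ 2 :=
          Finset.sum_le_sum (fun i _ => hccsq i)
      _ = δ ^ θ * ∑ i ∈ Finset.range m, a i ^ 2 := (Finset.mul_sum _ _ _).symm
      _ ≤ δ ^ θ * Sa := mul_le_mul_of_nonneg_left
          (Summable.sum_le_tsum _ (fun i _ => sq_nonneg _) ha) (Real.rpow_nonneg hδ0.le _)
  -- L² tail bound via Fatou
  have hL2 : ∫⁻ x, ENNReal.ofReal (f₂ x ^ 2) ∂Q ≤ ENNReal.ofReal (δ ^ θ * Sa) := by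
    have hlim : ∀ x, ENNReal.ofReal (f₂ x ^ 2)
        = Filter.liminf (fun m => ENNReal.ofReal
          ((∑ i ∈ Finset.range m, cc i * e i x)^2)) Filter.atTop := by
      intro x
      have h1 : Filter.Tendsto (fun m => ENNReal.ofReal
          ((∑ i ∈ Finset.range m, cc i * e i x)^2))
          Filter.atTop (nhds (ENNReal.ofReal (f₂ x ^ 2))) :=
        (ENNReal.continuous_ofReal.tendsto _).comp ((hpt x).pow 2)
      exact h1.liminf_eq.symm
    calc ∫⁻ x, ENNReal.ofReal (f₂ x ^ 2) ∂Q
        = ∫⁻ x, Filter.liminf (fun m => ENNReal.ofReal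
            ((∑ i ∈ Finset.range m, cc i * e i x)^2)) Filter.atTop ∂Q := by
          apply lintegral_congr
          intro x
          exact hlim x
      _ ≤ Filter.liminf (fun m => ∫⁻ x, ENNReal.ofReal
            ((∑ i ∈ Finset.range m, cc i * e i x)^2) ∂Q) Filter.atTop :=
          lintegral_liminf_le (fun m =>
            ENNReal.measurable_ofReal.comp ((hpmeas m).pow_const 2))
      _ ≤ ENNReal.ofReal (δ ^ θ * Sa) := by
          have hval : ∀ m : ℕ, ∫⁻ x, ENNReal.ofReal
              ((∑ i ∈ Finset.range m, cc i * e i x)^2) ∂Q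
              = ENNReal.ofReal (∑ i ∈ Finset.range m, cc i ^ 2) := by
            intro m
            rw [← ofReal_integral_eq_lintegral_ofReal (hpint m)
              (Filter.Eventually.of_forall fun x => sq_nonneg _), hpval m]
          calc Filter.liminf (fun m => ∫⁻ x, ENNReal.ofReal
                ((∑ i ∈ Finset.range m, cc i * e i x)^2) ∂Q) Filter.atTop
              ≤ Filter.liminf (fun _ => ENNReal.ofReal (δ ^ θ * Sa)) Filter.atTop :=
                Filter.liminf_le_liminf (by
                  filter_upwards with m
                  rw [hval m]
                  exact ENNReal.ofReal_le_ofReal (hrange_bd m))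
            _ = ENNReal.ofReal (δ ^ θ * Sa) := Filter.liminf_const _
  -- the L¹ tail scale
  set t : ℝ := δ ^ (θ/2) * K with htdef
  have ht0 : 0 < t := mul_pos (Real.rpow_pos_of_pos hδ0 _) hK0
  have htsq : δ ^ θ * Sa ≤ t ^ 2 := by
    rw [htdef, mul_pow, hrpow2 δ hδ0.le]
    exact mul_le_mul_of_nonneg_left hKsq (Real.rpow_nonneg hδ0.le θ)
  -- L¹ bound for f₂ w.r.t. Q
  have hf₂Q1 : ∫⁻ x, ENNReal.ofReal |f₂ x| ∂Q ≤ ENNReal.ofReal t := by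
    calc ∫⁻ x, ENNReal.ofReal |f₂ x| ∂Q
        ≤ ∫⁻ x, (ENNReal.ofReal (t/2)
            + ENNReal.ofReal (f₂ x ^ 2) * ENNReal.ofReal (1/(2*t))) ∂Q := by
          apply lintegral_mono
          intro x
          show ENNReal.ofReal |f₂ x| ≤ ENNReal.ofReal (t/2)
            + ENNReal.ofReal (f₂ x ^ 2) * ENNReal.ofReal (1/(2*t))
          rw [← ENNReal.ofReal_mul (sq_nonneg _),
            ← ENNReal.ofReal_add (by positivity) (by positivity)]
          apply ENNReal.ofReal_le_ofReal
          calc |f₂ x| ≤ (t + f₂ x ^ 2 / t) / 2 := habs_le t (f₂ x) ht0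
            _ = t/2 + f₂ x ^ 2 * (1/(2*t)) := by
                field_simp
      _ = ENNReal.ofReal (t/2)
          + (∫⁻ x, ENNReal.ofReal (f₂ x ^ 2) ∂Q) * ENNReal.ofReal (1/(2*t)) := by
          rw [lintegral_add_left measurable_const, lintegral_const, measure_univ, mul_one,
            lintegral_mul_const _ (hf₂meas.pow_const 2).ennreal_ofReal]
      _ ≤ ENNReal.ofReal (t/2) + ENNReal.ofReal (t^2) * ENNReal.ofReal (1/(2*t)) :=
          add_le_add_right (mul_le_mul_left
            (hL2.trans (ENNReal.ofReal_le_ofReal htsq)) _) _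
      _ = ENNReal.ofReal t := by
          rw [← ENNReal.ofReal_mul (sq_nonneg t),
            ← ENNReal.ofReal_add (by positivity) (by positivity)]
          congr 1
          field_simp
          ring
  -- f₂ is integrable w.r.t. P with small mean
  have hf₂Pint : Integrable f₂ P := by
    constructor
    · exact hf₂meas.aestronglyMeasurable
    · rw [hasFiniteIntegral_iff_norm]
      calc ∫⁻ x, ENNReal.ofReal ‖f₂ x‖ ∂P
          ≤ (R:ℝ≥0∞) * ∫⁻ x, ENNReal.ofReal ‖f₂ x‖ ∂Q := hPQle _ hf₂meas.norm
        _ ≤ (R:ℝ≥0∞) * ENNReal.ofReal t := by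
            apply mul_le_mul_right
            simpa [Real.norm_eq_abs] using hf₂Q1
        _ < ⊤ := ENNReal.mul_lt_top ENNReal.coe_lt_top ENNReal.ofReal_lt_top
  have hf₂P_bd : |∫ x, f₂ x ∂P| ≤ (R:ℝ) * t := by
    have h1 : |∫ x, f₂ x ∂P| ≤ ∫ x, |f₂ x| ∂P := by
      simpa using norm_integral_le_integral_norm (μ := P) f₂
    have h2 : ENNReal.ofReal (∫ x, |f₂ x| ∂P) ≤ ENNReal.ofReal ((R:ℝ) * t) := by
      rw [ofReal_integral_eq_lintegral_ofReal hf₂Pint.abs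
        (Filter.Eventually.of_forall fun x => abs_nonneg _)]
      calc ∫⁻ x, ENNReal.ofReal |f₂ x| ∂P
          ≤ (R:ℝ≥0∞) * ∫⁻ x, ENNReal.ofReal |f₂ x| ∂Q := hPQle _ hf₂meas.abs
        _ ≤ (R:ℝ≥0∞) * ENNReal.ofReal t := mul_le_mul_right hf₂Q1 _
        _ = ENNReal.ofReal ((R:ℝ) * t) := by
            rw [ENNReal.ofReal_mul R.coe_nonneg, ENNReal.ofReal_coe_nnreal]
    have h3 := ENNReal.toReal_mono ENNReal.ofReal_ne_top h2
    rw [ENNReal.toReal_ofReal (integral_nonneg fun x => abs_nonneg _),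
      ENNReal.toReal_ofReal (by positivity)] at h3
    exact h1.trans h3
  -- truncations of f₂ and the sampling bound
  have hBtrunc : ∀ M : ℕ, ∫ ω, ∑ j, (min |f₂ (X n j ω)| (M:ℝ)) ^ 2 ∂μΩ
      ≤ (n:ℝ) * (D^2 * (δ ^ θ * Sa)) := by
    intro M
    have hgMmeas : Measurable (fun x => min |f₂ x| (M:ℝ)) :=
      hf₂meas.abs.min measurable_const
    have hgM0 : ∀ x, 0 ≤ min |f₂ x| (M:ℝ) :=
      fun x => le_min (abs_nonneg _) (Nat.cast_nonneg _)
    have hgMle : ∀ x, (min |f₂ x| (M:ℝ)) ^ 2 ≤ f₂ x ^ 2 := by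
      intro x
      have h1 : min |f₂ x| (M:ℝ) ≤ |f₂ x| := min_le_left _ _
      calc (min |f₂ x| (M:ℝ)) ^ 2 ≤ |f₂ x| ^ 2 := pow_le_pow_left₀ (hgM0 x) h1 2
        _ = f₂ x ^ 2 := sq_abs _
    have hgMbd : ∀ x, (min |f₂ x| (M:ℝ)) ^ 2 ≤ (M:ℝ)^2 := by
      intro x
      exact pow_le_pow_left₀ (hgM0 x) (min_le_right _ _) 2
    have hgMint : Integrable (fun x => (min |f₂ x| (M:ℝ))^2) Q := by
      refine Integrable.mono' (integrable_const ((M:ℝ)^2))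
        (hgMmeas.pow_const 2).aestronglyMeasurable ?_
      filter_upwards with x
      rw [Real.norm_eq_abs, abs_of_nonneg (sq_nonneg _)]
      exact hgMbd x
    have hgMQbd : ∫ x, (min |f₂ x| (M:ℝ))^2 ∂Q ≤ δ ^ θ * Sa := by
      have h1 : ENNReal.ofReal (∫ x, (min |f₂ x| (M:ℝ))^2 ∂Q)
          ≤ ENNReal.ofReal (δ ^ θ * Sa) := by
        rw [ofReal_integral_eq_lintegral_ofReal hgMint
          (Filter.Eventually.of_forall fun x => sq_nonneg _)]
        refine le_trans (lintegral_mono fun x => ENNReal.ofReal_le_ofReal (hgMle x)) hL2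
      have h2 := ENNReal.toReal_mono (by simp) h1
      rwa [ENNReal.toReal_ofReal (integral_nonneg fun x => sq_nonneg _),
        ENNReal.toReal_ofReal (mul_nonneg (Real.rpow_nonneg hδ0.le _) hSa0)] at h2
    have hXint : ∀ i : Fin n, Integrable
        (fun ω => (min |f₂ (X n i ω)| (M:ℝ)) ^ 2) μΩ := by
      intro i
      refine Integrable.mono' (integrable_const ((M:ℝ)^2))
        (((hgMmeas.comp (hXmeas n i)).pow_const 2).aestronglyMeasurable) ?_
      filter_upwards with ω
      rw [Real.norm_eq_abs, abs_of_nonneg (sq_nonneg _)]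
      exact hgMbd _
    have hs := hsamp (fun x => min |f₂ x| (M:ℝ)) hgMmeas hgMint n hn hXint
    have hs2 : (1/(n:ℝ)) * ∫ ω, ∑ j, (min |f₂ (X n j ω)| (M:ℝ)) ^ 2 ∂μΩ
        ≤ D^2 * (δ ^ θ * Sa) := by
      rw [← integral_const_mul]
      exact hs.trans (mul_le_mul_of_nonneg_left hgMQbd (sq_nonneg D))
    have hnne : (n:ℝ) ≠ 0 := ne_of_gt npos
    calc ∫ ω, ∑ j, (min |f₂ (X n j ω)| (M:ℝ)) ^ 2 ∂μΩ
        = (n:ℝ) * ((1/(n:ℝ)) * ∫ ω, ∑ j, (min |f₂ (X n j ω)| (M:ℝ)) ^ 2 ∂μΩ) := by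
          field_simp
      _ ≤ (n:ℝ) * (D^2 * (δ ^ θ * Sa)) :=
          mul_le_mul_of_nonneg_left hs2 npos.le
  -- lintegral bound on the sampled squared tail, via monotone convergence
  have hFmeas : Measurable (fun ω => ∑ j, f₂ (X n j ω) ^ 2) :=
    Finset.measurable_sum _ (fun j _ => ((hf₂meas.comp (hXmeas n j)).pow_const 2))
  have hB : ∫⁻ ω, ENNReal.ofReal (∑ j, f₂ (X n j ω) ^ 2) ∂μΩ
      ≤ ENNReal.ofReal ((n:ℝ) * (D^2 * (δ ^ θ * Sa))) := by
    have hsup : ∀ ω, (⨆ M : ℕ, ENNReal.ofReal (∑ j, (min |f₂ (X n j ω)| (M:ℝ)) ^ 2))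
        = ENNReal.ofReal (∑ j, f₂ (X n j ω) ^ 2) := by
      intro ω
      apply le_antisymm
      · apply iSup_le
        intro M
        apply ENNReal.ofReal_le_ofReal
        apply Finset.sum_le_sum
        intro j _
        calc (min |f₂ (X n j ω)| (M:ℝ)) ^ 2 ≤ |f₂ (X n j ω)| ^ 2 :=
              pow_le_pow_left₀ (le_min (abs_nonneg _) (Nat.cast_nonneg _)) (min_le_left _ _) 2
          _ = f₂ (X n j ω) ^ 2 := sq_abs _
      · obtain ⟨M, hM⟩ := exists_nat_ge (∑ j, |f₂ (X n j ω)| : ℝ)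
        have hjle : ∀ j : Fin n, |f₂ (X n j ω)| ≤ (M:ℝ) := by
          intro j
          refine le_trans ?_ hM
          exact Finset.single_le_sum (f := fun j : Fin n => |f₂ (X n j ω)|) (fun j _ => abs_nonneg _) (Finset.mem_univ j)
        have heq : ENNReal.ofReal (∑ j, f₂ (X n j ω) ^ 2)
            = ENNReal.ofReal (∑ j, (min |f₂ (X n j ω)| (M:ℝ)) ^ 2) := by
          congr 1
          apply Finset.sum_congr rfl
          intro j _
          rw [min_eq_left (hjle j), sq_abs]
        rw [heq]
        exact le_iSup (fun M : ℕ =>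
          ENNReal.ofReal (∑ j, (min |f₂ (X n j ω)| (M:ℝ)) ^ 2)) M
    have hMmeas : ∀ M : ℕ, Measurable
        (fun ω => ENNReal.ofReal (∑ j, (min |f₂ (X n j ω)| (M:ℝ)) ^ 2)) := by
      intro M
      apply Measurable.ennreal_ofReal
      exact Finset.measurable_sum _ (fun j _ =>
        (((hf₂meas.comp (hXmeas n j)).abs.min measurable_const).pow_const 2))
    have hmono : Monotone (fun (M : ℕ) (ω : Ω) =>
        ENNReal.ofReal (∑ j, (min |f₂ (X n j ω)| (M:ℝ)) ^ 2)) := by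
      intro M M' hMM
      intro ω
      apply ENNReal.ofReal_le_ofReal
      apply Finset.sum_le_sum
      intro j _
      apply pow_le_pow_left₀ (le_min (abs_nonneg _) (Nat.cast_nonneg _))
      exact le_min (min_le_left _ _) (le_trans (min_le_right _ _) (Nat.cast_le.2 hMM))
    calc ∫⁻ ω, ENNReal.ofReal (∑ j, f₂ (X n j ω) ^ 2) ∂μΩ
        = ∫⁻ ω, ⨆ M : ℕ, ENNReal.ofReal (∑ j, (min |f₂ (X n j ω)| (M:ℝ)) ^ 2) ∂μΩ := by
          apply lintegral_congr
          intro ω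
          exact (hsup ω).symm
      _ = ⨆ M : ℕ, ∫⁻ ω, ENNReal.ofReal (∑ j, (min |f₂ (X n j ω)| (M:ℝ)) ^ 2) ∂μΩ :=
          lintegral_iSup hMmeas hmono
      _ ≤ ENNReal.ofReal ((n:ℝ) * (D^2 * (δ ^ θ * Sa))) := by
          apply iSup_le
          intro M
          have hint : Integrable (fun ω => ∑ j, (min |f₂ (X n j ω)| (M:ℝ)) ^ 2) μΩ := by
            apply integrable_finset_sum
            intro j _
            refine Integrable.mono' (integrable_const ((M:ℝ)^2))
              ((((hf₂meas.comp (hXmeas n j)).abs.min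
                measurable_const).pow_const 2).aestronglyMeasurable) ?_
            filter_upwards with ω
            rw [Real.norm_eq_abs, abs_of_nonneg (sq_nonneg _)]
            exact pow_le_pow_left₀ (le_min (abs_nonneg _) (Nat.cast_nonneg _))
              (min_le_right _ _) 2
          rw [← ofReal_integral_eq_lintegral_ofReal hint
            (Filter.Eventually.of_forall fun ω => Finset.sum_nonneg fun j _ => sq_nonneg _)]
          exact ENNReal.ofReal_le_ofReal (hBtrunc M)
  -- lintegral bound on the squared weights
  have hwmeasΩ : Measurable (fun ω => ∑ j, (w n j ω)^2) :=
    Finset.measurable_sum _ (fun j _ => (hwmeas n j).pow_const 2)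
  have hA : ∫⁻ ω, ENNReal.ofReal (∑ j, (w n j ω)^2) ∂μΩ
      ≤ ENNReal.ofReal (C₂ * (n:ℝ) ^ (-(2*c))) := by
    rw [← ofReal_integral_eq_lintegral_ofReal (hw_int n)
      (Filter.Eventually.of_forall fun ω => Finset.sum_nonneg fun j _ => sq_nonneg _)]
    exact ENNReal.ofReal_le_ofReal (hw_rate n hn)
  -- Hölder / Cauchy–Schwarz on Ω
  have hwf₂meas : Measurable (fun ω => ∑ j, w n j ω * f₂ (X n j ω)) :=
    Finset.measurable_sum _ (fun j _ => (hwmeas n j).mul (hf₂meas.comp (hXmeas n j)))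
  set G1 : ℝ := Real.sqrt (C₂ * (n:ℝ) ^ (-(2*c))) with hG1def
  set G2 : ℝ := Real.sqrt ((n:ℝ) * (D^2 * (δ ^ θ * Sa))) with hG2def
  have hG10 : 0 ≤ G1 := Real.sqrt_nonneg _
  have hG20 : 0 ≤ G2 := Real.sqrt_nonneg _
  have hHold : ∫⁻ ω, ENNReal.ofReal |∑ j, w n j ω * f₂ (X n j ω)| ∂μΩ
      ≤ ENNReal.ofReal (G1 * G2) := by
    have hpq : Real.HolderConjugate 2 2 := Real.HolderConjugate.two_two
    have hfm : AEMeasurable (fun ω => ENNReal.ofReal (Real.sqrt (∑ j, (w n j ω)^2))) μΩ :=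
      (hwmeasΩ.sqrt.ennreal_ofReal).aemeasurable
    have hgm : AEMeasurable (fun ω => ENNReal.ofReal (Real.sqrt (∑ j, f₂ (X n j ω) ^ 2))) μΩ :=
      (hFmeas.sqrt.ennreal_ofReal).aemeasurable
    have key := ENNReal.lintegral_mul_le_Lp_mul_Lq μΩ hpq hfm hgm
    have hsq : ∀ u : ℝ, 0 ≤ u → (ENNReal.ofReal (Real.sqrt u)) ^ (2:ℝ) = ENNReal.ofReal u := by
      intro u hu
      rw [ENNReal.ofReal_rpow_of_nonneg (Real.sqrt_nonneg _) (by norm_num : (0:ℝ) ≤ 2)]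
      congr 1
      rw [show (2:ℝ) = ((2:ℕ):ℝ) by norm_num, Real.rpow_natCast, Real.sq_sqrt hu]
    have hpw : (fun ω => ENNReal.ofReal |∑ j, w n j ω * f₂ (X n j ω)|)
        ≤ fun ω => (ENNReal.ofReal (Real.sqrt (∑ j, (w n j ω)^2))
          * ENNReal.ofReal (Real.sqrt (∑ j, f₂ (X n j ω) ^ 2))) := by
      intro ω
      show ENNReal.ofReal |∑ j, w n j ω * f₂ (X n j ω)|
        ≤ ENNReal.ofReal (Real.sqrt (∑ j, (w n j ω)^2))
          * ENNReal.ofReal (Real.sqrt (∑ j, f₂ (X n j ω) ^ 2))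
      have hw0 : (0:ℝ) ≤ ∑ j, (w n j ω)^2 := Finset.sum_nonneg fun j _ => sq_nonneg _
      rw [← ENNReal.ofReal_mul (Real.sqrt_nonneg _), ← Real.sqrt_mul hw0]
      apply ENNReal.ofReal_le_ofReal
      have hcs : (∑ j, w n j ω * f₂ (X n j ω))^2
          ≤ (∑ j, (w n j ω)^2) * (∑ j, f₂ (X n j ω)^2) :=
        Finset.sum_mul_sq_le_sq_mul_sq Finset.univ _ _
      calc |∑ j, w n j ω * f₂ (X n j ω)|
          = Real.sqrt ((∑ j, w n j ω * f₂ (X n j ω))^2) := (Real.sqrt_sq_eq_abs _).symm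
        _ ≤ Real.sqrt ((∑ j, (w n j ω)^2) * (∑ j, f₂ (X n j ω)^2)) := Real.sqrt_le_sqrt hcs
    calc ∫⁻ ω, ENNReal.ofReal |∑ j, w n j ω * f₂ (X n j ω)| ∂μΩ
        ≤ ∫⁻ ω, (ENNReal.ofReal (Real.sqrt (∑ j, (w n j ω)^2))
            * ENNReal.ofReal (Real.sqrt (∑ j, f₂ (X n j ω) ^ 2))) ∂μΩ :=
          lintegral_mono hpw
      _ ≤ (∫⁻ ω, ENNReal.ofReal (Real.sqrt (∑ j, (w n j ω)^2)) ^ (2:ℝ) ∂μΩ) ^ ((1:ℝ)/2)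
          * (∫⁻ ω, ENNReal.ofReal (Real.sqrt (∑ j, f₂ (X n j ω) ^ 2)) ^ (2:ℝ) ∂μΩ) ^ ((1:ℝ)/2) :=
          key
      _ ≤ (ENNReal.ofReal (C₂ * (n:ℝ) ^ (-(2*c)))) ^ ((1:ℝ)/2)
          * (ENNReal.ofReal ((n:ℝ) * (D^2 * (δ ^ θ * Sa)))) ^ ((1:ℝ)/2) := by
          apply mul_le_mul'
          · apply ENNReal.rpow_le_rpow _ (by norm_num)
            calc ∫⁻ ω, ENNReal.ofReal (Real.sqrt (∑ j, (w n j ω)^2)) ^ (2:ℝ) ∂μΩ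
                = ∫⁻ ω, ENNReal.ofReal (∑ j, (w n j ω)^2) ∂μΩ :=
                  lintegral_congr fun ω => hsq _ (Finset.sum_nonneg fun j _ => sq_nonneg _)
              _ ≤ _ := hA
          · apply ENNReal.rpow_le_rpow _ (by norm_num)
            calc ∫⁻ ω, ENNReal.ofReal (Real.sqrt (∑ j, f₂ (X n j ω) ^ 2)) ^ (2:ℝ) ∂μΩ
                = ∫⁻ ω, ENNReal.ofReal (∑ j, f₂ (X n j ω) ^ 2) ∂μΩ :=
                  lintegral_congr fun ω => hsq _ (Finset.sum_nonneg fun j _ => sq_nonneg _)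
              _ ≤ _ := hB
      _ = ENNReal.ofReal (G1 * G2) := by
          have hv1 : (0:ℝ) ≤ C₂ * (n:ℝ) ^ (-(2*c)) :=
            mul_nonneg hC₂.le (Real.rpow_nonneg npos.le _)
          have hv2 : (0:ℝ) ≤ (n:ℝ) * (D^2 * (δ ^ θ * Sa)) := by
            have := Real.rpow_nonneg hδ0.le θ
            positivity
          rw [ENNReal.ofReal_rpow_of_nonneg hv1 (by norm_num : (0:ℝ) ≤ 1/2),
            ENNReal.ofReal_rpow_of_nonneg hv2 (by norm_num : (0:ℝ) ≤ 1/2),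
            ← ENNReal.ofReal_mul (Real.rpow_nonneg hv1 _), hG1def, hG2def,
            Real.sqrt_eq_rpow, Real.sqrt_eq_rpow]
  -- integral bound for the sampled tail term
  have hwf₂int : Integrable (fun ω => ∑ j, w n j ω * f₂ (X n j ω)) μΩ := by
    constructor
    · exact hwf₂meas.aestronglyMeasurable
    · rw [hasFiniteIntegral_iff_norm]
      calc ∫⁻ ω, ENNReal.ofReal ‖∑ j, w n j ω * f₂ (X n j ω)‖ ∂μΩ
          = ∫⁻ ω, ENNReal.ofReal |∑ j, w n j ω * f₂ (X n j ω)| ∂μΩ := by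
            apply lintegral_congr
            intro ω
            rw [Real.norm_eq_abs]
        _ ≤ ENNReal.ofReal (G1 * G2) := hHold
        _ < ⊤ := ENNReal.ofReal_lt_top
  have hwf₂bd : ∫ ω, |∑ j, w n j ω * f₂ (X n j ω)| ∂μΩ ≤ G1 * G2 := by
    have h2 : ENNReal.ofReal (∫ ω, |∑ j, w n j ω * f₂ (X n j ω)| ∂μΩ)
        ≤ ENNReal.ofReal (G1 * G2) := by
      rw [ofReal_integral_eq_lintegral_ofReal hwf₂int.abs
        (Filter.Eventually.of_forall fun ω => abs_nonneg _)]
      exact hHold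
    have h3 := ENNReal.toReal_mono (by simp) h2
    rwa [ENNReal.toReal_ofReal (integral_nonneg fun ω => abs_nonneg _),
      ENNReal.toReal_ofReal (mul_nonneg hG10 hG20)] at h3
  -- decomposition of the integration error
  have hf₁Pint : Integrable f₁ P := by
    have hfe : f₁ = fun x => ∑ i ∈ S, gc i * e i x := funext hf₁def
    rw [hfe]
    exact integrable_finset_sum _ (fun i _ => (heiPint i).const_mul _)
  have hsplitP : ∫ x, f x ∂P = (∫ x, f₁ x ∂P) + ∫ x, f₂ x ∂P := by
    have h1 : ∫ x, f x ∂P = ∫ x, (f₁ x + f₂ x) ∂P := by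
      apply integral_congr_ae
      filter_upwards with x
      rw [hf₂def]
      ring
    rw [h1, integral_add hf₁Pint hf₂Pint]
  have herr_split : ∀ ω, (∑ j, w n j ω * f (X n j ω)) - ∫ x, f x ∂P
      = ((∑ j, w n j ω * f₁ (X n j ω)) - ∫ x, f₁ x ∂P)
        + ((∑ j, w n j ω * f₂ (X n j ω)) - ∫ x, f₂ x ∂P) := by
    intro ω
    have h1 : ∀ j : Fin n, w n j ω * f (X n j ω)
        = w n j ω * f₁ (X n j ω) + w n j ω * f₂ (X n j ω) := by
      intro j
      rw [hf₂def]
      ring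
    rw [Finset.sum_congr rfl (fun j _ => h1 j), Finset.sum_add_distrib, hsplitP]
    ring
  have herr2_int : Integrable
      (fun ω => (∑ j, w n j ω * f₂ (X n j ω)) - ∫ x, f₂ x ∂P) μΩ :=
    hwf₂int.sub (integrable_const _)
  have herr2_bd : ∫ ω, |(∑ j, w n j ω * f₂ (X n j ω)) - ∫ x, f₂ x ∂P| ∂μΩ
      ≤ G1 * G2 + (R:ℝ) * t := by
    calc ∫ ω, |(∑ j, w n j ω * f₂ (X n j ω)) - ∫ x, f₂ x ∂P| ∂μΩ
        ≤ ∫ ω, (|∑ j, w n j ω * f₂ (X n j ω)| + |∫ x, f₂ x ∂P|) ∂μΩ := by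
          apply integral_mono herr2_int.abs (hwf₂int.abs.add (integrable_const _))
          intro ω
          exact abs_sub _ _
      _ = (∫ ω, |∑ j, w n j ω * f₂ (X n j ω)| ∂μΩ) + |∫ x, f₂ x ∂P| := by
          rw [integral_add hwf₂int.abs (integrable_const _), integral_const]
          simp
      _ ≤ G1 * G2 + (R:ℝ) * t := add_le_add hwf₂bd hf₂P_bd
  -- exponent arithmetic
  have hsqr : ∀ (x u : ℝ), 0 ≤ x → (x ^ u)^2 = x ^ (2*u) := by
    intro x u hx
    rw [← Real.rpow_natCast (x ^ u) 2, ← Real.rpow_mul hx]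
    congr 1
    ring
  have hx1 : δ ^ ((θ-1)/2) * (n:ℝ)^(-b) = (n:ℝ) ^ (-(θ*b) + (1/2 - c)*(1-θ)) := by
    rw [hδdef, ← Real.rpow_mul npos.le, ← Real.rpow_add npos]
    congr 1
    rw [hβdef]
    ring
  have hx2 : δ ^ (θ/2) * ((n:ℝ)^(-c) * (n:ℝ)^((1:ℝ)/2))
      = (n:ℝ) ^ (-(θ*b) + (1/2 - c)*(1-θ)) := by
    rw [hδdef, ← Real.rpow_mul npos.le, ← Real.rpow_add npos, ← Real.rpow_add npos]
    congr 1
    rw [hβdef]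
    ring
  have hx3 : δ ^ (θ/2) ≤ (n:ℝ) ^ (-(θ*b) + (1/2 - c)*(1-θ)) := by
    rw [hδdef, ← Real.rpow_mul npos.le]
    apply Real.rpow_le_rpow_of_exponent_le hn1
    rw [hβdef]
    nlinarith [hθ0.le, hθ1, hc, hb.le, hc0.le]
  have hG1eq : G1 = Real.sqrt C₂ * (n:ℝ)^(-c) := by
    rw [hG1def, Real.sqrt_mul hC₂.le]
    congr 1
    have h1 : (n:ℝ)^(-(2*c)) = ((n:ℝ)^(-c))^2 := by
      rw [hsqr _ _ npos.le]
      congr 1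
      ring
    rw [h1, Real.sqrt_sq (Real.rpow_nonneg npos.le _)]
  have hG2le : G2 ≤ (n:ℝ)^((1:ℝ)/2) * D * (δ^(θ/2) * K) := by
    rw [hG2def]
    have h1 : (n:ℝ) * (D^2 * (δ ^ θ * Sa)) ≤ ((n:ℝ)^((1:ℝ)/2) * D * (δ^(θ/2) * K))^2 := by
      have h2 : ((n:ℝ)^((1:ℝ)/2) * D * (δ^(θ/2) * K))^2
          = (n:ℝ) * (D^2 * (δ ^ θ * K^2)) := by
        rw [mul_pow, mul_pow, mul_pow, hsqr _ _ npos.le, hsqr _ _ hδ0.le]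
        rw [show (2:ℝ) * (1/2) = 1 by norm_num, Real.rpow_one,
          show (2:ℝ) * (θ/2) = θ by ring]
        ring
      rw [h2]
      have h3 : δ ^ θ * Sa ≤ δ ^ θ * K^2 :=
        mul_le_mul_of_nonneg_left hKsq (Real.rpow_nonneg hδ0.le _)
      apply mul_le_mul_of_nonneg_left _ npos.le
      exact mul_le_mul_of_nonneg_left h3 (sq_nonneg D)
    calc Real.sqrt ((n:ℝ) * (D^2 * (δ ^ θ * Sa)))
        ≤ Real.sqrt (((n:ℝ)^((1:ℝ)/2) * D * (δ^(θ/2) * K))^2) := Real.sqrt_le_sqrt h1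
      _ = (n:ℝ)^((1:ℝ)/2) * D * (δ^(θ/2) * K) := Real.sqrt_sq (by positivity)
  -- put everything together
  have hδθ0 : (0:ℝ) ≤ δ^(θ/2) := Real.rpow_nonneg hδ0.le _
  have hnE0 : (0:ℝ) ≤ (n:ℝ) ^ (-(θ*b) + (1/2 - c)*(1-θ)) := Real.rpow_nonneg npos.le _
  calc ∫ ω, |(∑ j, w n j ω * f (X n j ω)) - ∫ x, f x ∂P| ∂μΩ
      ≤ ∫ ω, (|(∑ j, w n j ω * f₁ (X n j ω)) - ∫ x, f₁ x ∂P|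
          + |(∑ j, w n j ω * f₂ (X n j ω)) - ∫ x, f₂ x ∂P|) ∂μΩ := by
        apply integral_mono (herr_int n) (herr1_int.abs.add herr2_int.abs)
        intro ω
        show |(∑ j, w n j ω * f (X n j ω)) - ∫ x, f x ∂P|
          ≤ |(∑ j, w n j ω * f₁ (X n j ω)) - ∫ x, f₁ x ∂P|
            + |(∑ j, w n j ω * f₂ (X n j ω)) - ∫ x, f₂ x ∂P|
        rw [herr_split ω]
        exact abs_add_le _ _
    _ = (∫ ω, |(∑ j, w n j ω * f₁ (X n j ω)) - ∫ x, f₁ x ∂P| ∂μΩ)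
        + ∫ ω, |(∑ j, w n j ω * f₂ (X n j ω)) - ∫ x, f₂ x ∂P| ∂μΩ :=
        integral_add herr1_int.abs herr2_int.abs
    _ ≤ (Real.sqrt Sa * δ ^ ((θ-1)/2)) * (C₁ * (n:ℝ) ^ (-b)) + (G1 * G2 + (R:ℝ) * t) :=
        add_le_add herr1_ibd herr2_bd
    _ ≤ K * C₁ * (n:ℝ) ^ (-(θ*b) + (1/2 - c)*(1-θ))
        + (K * (Real.sqrt C₂ * D) * (n:ℝ) ^ (-(θ*b) + (1/2 - c)*(1-θ))
          + K * (R:ℝ) * (n:ℝ) ^ (-(θ*b) + (1/2 - c)*(1-θ))) := by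
        apply add_le_add
        · calc (Real.sqrt Sa * δ ^ ((θ-1)/2)) * (C₁ * (n:ℝ) ^ (-b))
              = Real.sqrt Sa * C₁ * (δ ^ ((θ-1)/2) * (n:ℝ) ^ (-b)) := by ring
            _ = Real.sqrt Sa * C₁ * (n:ℝ) ^ (-(θ*b) + (1/2 - c)*(1-θ)) := by rw [hx1]
            _ ≤ K * C₁ * (n:ℝ) ^ (-(θ*b) + (1/2 - c)*(1-θ)) := by
                apply mul_le_mul_of_nonneg_right _ hnE0
                exact mul_le_mul_of_nonneg_right hKSa hC₁.le
        · apply add_le_add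
          · calc G1 * G2 ≤ (Real.sqrt C₂ * (n:ℝ)^(-c)) * ((n:ℝ)^((1:ℝ)/2) * D * (δ^(θ/2) * K)) := by
                  rw [← hG1eq]
                  apply mul_le_mul_of_nonneg_left hG2le hG10
              _ = K * (Real.sqrt C₂ * D) * (δ ^ (θ/2) * ((n:ℝ)^(-c) * (n:ℝ)^((1:ℝ)/2))) := by
                  ring
              _ = K * (Real.sqrt C₂ * D) * (n:ℝ) ^ (-(θ*b) + (1/2 - c)*(1-θ)) := by
                  rw [hx2]
          · calc (R:ℝ) * t = (R:ℝ) * K * δ^(θ/2) := by rw [htdef]; ring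
              _ ≤ (R:ℝ) * K * (n:ℝ) ^ (-(θ*b) + (1/2 - c)*(1-θ)) := by
                  apply mul_le_mul_of_nonneg_left hx3
                  exact mul_nonneg R.coe_nonneg hK0.le
              _ = K * (R:ℝ) * (n:ℝ) ^ (-(θ*b) + (1/2 - c)*(1-θ)) := by ring
    _ = K * (C₁ + Real.sqrt C₂ * D + (R:ℝ)) * (n:ℝ) ^ (-(θ*b) + (1/2 - c)*(1-θ)) := by
        ring
end

section
/- Let d ≥ 1 and s ∈ ℕ. Then there exists a real-valued Schwartz function ψ on ℝ^d such that: (a) ψ is radial, i.e. ψ(x) = ψ(y) whenever ‖x‖ = ‖y‖; (b) its Fourier transform 𝓕ψ vanishes outside the closed unit ball, i.e. 𝓕ψ(ξ) = 0 for all ‖ξ‖ ≥ 1; (c) ∫_{ℝ^d} x^β ψ(x) dx = 0 for every multi-index β = (β₁,…,β_d) with |β| := Σᵢ βᵢ ≤ s, where x^β := x₁^{β₁}⋯x_d^{β_d}; (d) for every ξ ∈ ℝ^d with ξ ≠ 0, ∫₀^∞ |𝓕ψ(tξ)|² dt/t = 1. -/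
open MeasureTheory
open scoped FourierTransform

noncomputable section
namespace CalderonAux

/-- A smooth compactly supported function is a Schwartz function. -/
def ofCompactSupport {E F : Type*} [NormedAddCommGroup E] [NormedSpace ℝ E]
    [NormedAddCommGroup F] [NormedSpace ℝ F]
    (f : E → F) (hsm : ContDiff ℝ ((⊤:ℕ∞)) f) (hcs : HasCompactSupport f) : SchwartzMap E F where
  toFun := f
  smooth' := hsm
  decay' := by
    intro k n
    obtain ⟨C, hC⟩ := Continuous.bounded_above_of_compact_support
      (((continuous_norm.pow k)).mul (hsm.continuous_iteratedFDeriv (mod_cast le_top)).norm)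
      (((hcs.iteratedFDeriv n).norm.mul_left))
    exact ⟨C, fun x => (le_abs_self _).trans (hC x)⟩

def bump : ContDiffBump (1/2 : ℝ) := ⟨1/8, 1/4, by norm_num, by norm_num⟩

lemma bump_nonneg (r : ℝ) : 0 ≤ bump r := bump.nonneg

lemma bump_zero_of_le {r : ℝ} (h : r ≤ 1/4) : bump r = 0 := by
  apply bump.zero_of_le_dist
  rw [Real.dist_eq, abs_sub_comm, abs_of_nonneg (by linarith)]
  show (1/4:ℝ) ≤ 1/2 - r
  linarith

lemma bump_zero_of_ge {r : ℝ} (h : 3/4 ≤ r) : bump r = 0 := by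
  apply bump.zero_of_le_dist
  rw [Real.dist_eq, abs_of_nonneg (by linarith)]
  show (1/4:ℝ) ≤ r - 1/2
  linarith

lemma bump_one {r : ℝ} (h1 : 3/8 ≤ r) (h2 : r ≤ 5/8) : bump r = 1 := by
  apply bump.one_of_mem_closedBall
  rw [Metric.mem_closedBall, Real.dist_eq, abs_le]
  show -(1/8:ℝ) ≤ r - 1/2 ∧ r - 1/2 ≤ 1/8
  constructor <;> linarith

lemma lt_of_bump_ne_zero {r : ℝ} (h : bump r ≠ 0) : 1/4 < r := by
  by_contra hc
  exact h (bump_zero_of_le (not_lt.mp hc))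


def rho (t : ℝ) : ℝ := t / max (t^2) (1/4)

lemma rho_cont : Continuous rho := by
  apply continuous_id.div ((continuous_pow 2).max continuous_const)
  intro t
  have : (0:ℝ) < max (t^2) (1/4) := lt_of_lt_of_le (by norm_num) (le_max_right _ _)
  exact this.ne'

lemma rho_nonneg {t : ℝ} (ht : 0 ≤ t) : 0 ≤ rho t := by
  have : (0:ℝ) < max (t^2) (1/4) := lt_of_lt_of_le (by norm_num) (le_max_right _ _)
  exact div_nonneg ht this.le

def Fc (t : ℝ) : ℝ := (bump (t^2))^2 * rho t

lemma Fc_nonneg {t : ℝ} (ht : 0 ≤ t) : 0 ≤ Fc t :=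
  mul_nonneg (sq_nonneg _) (rho_nonneg ht)

lemma Fc_cont : Continuous Fc :=
  ((bump.continuous.comp (continuous_pow 2)).pow 2).mul rho_cont

lemma Fc_hcs : HasCompactSupport Fc := by
  apply HasCompactSupport.intro (isCompact_Icc (a := (-1:ℝ)) (b := 1))
  intro t ht
  have h1 : (1:ℝ) < |t| := by
    rcases not_and_or.mp (fun h : -1 ≤ t ∧ t ≤ 1 => ht h) with h | h
    · rw [abs_of_neg (by linarith [not_le.mp h])]; linarith [not_le.mp h]
    · rw [abs_of_pos (by linarith [not_le.mp h])]; linarith [not_le.mp h]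
  have h2 : (3/4:ℝ) ≤ t^2 := by
    have : (1:ℝ) < t^2 := by
      have := one_lt_pow₀ h1 (two_ne_zero)
      rwa [← sq_abs]
    linarith
  simp [Fc, bump_zero_of_ge h2]

lemma Fc_int : Integrable Fc := Fc_cont.integrable_of_hasCompactSupport Fc_hcs

def c0 : ℝ := ∫ t in Set.Ioi (0:ℝ), Fc t

lemma Fc_lower {t : ℝ} (h1 : 63/100 ≤ t) (h2 : t ≤ 78/100) : 1 ≤ Fc t := by
  have ht0 : (0:ℝ) < t := by linarith
  have hsq1 : (3/8:ℝ) ≤ t^2 := by nlinarith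
  have hsq2 : t^2 ≤ 5/8 := by nlinarith
  have hb : bump (t^2) = 1 := bump_one hsq1 hsq2
  have hmax : max (t^2) (1/4) = t^2 := max_eq_left (by linarith)
  have : Fc t = 1/t := by
    rw [Fc, hb, one_pow, one_mul, rho, hmax, pow_two, div_mul_eq_div_div_swap, div_self ht0.ne']
  rw [this]
  rw [le_div_iff₀ ht0]
  linarith

lemma c0_pos : 0 < c0 := by
  have hsub : Set.Icc (63/100:ℝ) (78/100) ⊆ Set.Ioi 0 := by
    intro t ht; exact lt_of_lt_of_le (by norm_num) ht.1
  have h1 : (15/100 : ℝ) ≤ ∫ t in Set.Icc (63/100:ℝ) (78/100), Fc t := by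
    have := setIntegral_ge_of_const_le (c := 1) (measurableSet_Icc)
      (measure_Icc_lt_top.ne) (fun x hx => Fc_lower hx.1 hx.2) (Fc_int.integrableOn)
    rw [Real.volume_real_Icc] at this
    norm_num at this
    linarith
  have h2 : ∫ t in Set.Icc (63/100:ℝ) (78/100), Fc t ≤ c0 := by
    apply setIntegral_mono_set Fc_int.integrableOn
    · filter_upwards [ae_restrict_mem measurableSet_Ioi] with t ht
      exact Fc_nonneg (le_of_lt ht)
    · exact HasSubset.Subset.eventuallyLE hsub
  linarith

lemma keyEq {a t : ℝ} (ha : 0 < a) (ht : 0 < t) :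
    (bump ((a*t)^2))^2 / t = a * Fc (a*t) := by
  by_cases hb : bump ((a*t)^2) = 0
  · simp [Fc, hb]
  · have h14 : 1/4 < (a*t)^2 := lt_of_bump_ne_zero hb
    have hat : 0 < a * t := mul_pos ha ht
    rw [Fc, rho, max_eq_left h14.le]
    field_simp


def gE (d : ℕ) (ξ : EuclideanSpace ℝ (Fin d)) : ℂ :=
  (((Real.sqrt c0)⁻¹ * bump (‖ξ‖^2) : ℝ) : ℂ)

lemma gE_smooth (d : ℕ) : ContDiff ℝ ((⊤:ℕ∞)) (gE d) :=
  Complex.ofRealCLM.contDiff.comp (contDiff_const.mul (bump.contDiff.comp (contDiff_norm_sq ℝ)))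

lemma gE_hcs (d : ℕ) : HasCompactSupport (gE d) := by
  apply HasCompactSupport.intro (isCompact_closedBall (0 : EuclideanSpace ℝ (Fin d)) 1)
  intro ξ hξ
  have h1 : (1:ℝ) < ‖ξ‖ := by
    simpa [Metric.mem_closedBall, dist_zero_right, not_le] using hξ
  have h2 : (3/4:ℝ) ≤ ‖ξ‖^2 := by nlinarith
  simp [gE, bump_zero_of_ge h2]

def Psi0 (d : ℕ) : SchwartzMap (EuclideanSpace ℝ (Fin d)) ℂ :=
  ofCompactSupport (gE d) (gE_smooth d) (gE_hcs d)

lemma Psi0_apply {d : ℕ} (ξ : EuclideanSpace ℝ (Fin d)) : Psi0 d ξ = gE d ξ := rfl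

def Psi (d : ℕ) : SchwartzMap (EuclideanSpace ℝ (Fin d)) ℂ :=
  (SchwartzMap.fourierTransformCLE ℂ (SchwartzMap (EuclideanSpace ℝ (Fin d)) ℂ)).symm (Psi0 d)

lemma hFT (d : ℕ) : 𝓕 ⇑(Psi d) = ⇑(Psi0 d) := by
  have h : SchwartzMap.fourierTransformCLM ℂ (Psi d) = Psi0 d :=
    (SchwartzMap.fourierTransformCLE ℂ (SchwartzMap (EuclideanSpace ℝ (Fin d)) ℂ)).apply_symm_apply (Psi0 d)
  rw [← SchwartzMap.fourier_coe, ← SchwartzMap.fourierTransformCLM_apply ℂ (Psi d), h]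

lemma Psi0_radial {d : ℕ} {v w : EuclideanSpace ℝ (Fin d)} (h : ‖v‖ = ‖w‖) :
    Psi0 d v = Psi0 d w := by
  rw [Psi0_apply, Psi0_apply, gE, gE, h]

lemma fourier_radial (d : ℕ) {x y : EuclideanSpace ℝ (Fin d)} (h : ‖x‖ = ‖y‖) :
    𝓕 ⇑(Psi0 d) x = 𝓕 ⇑(Psi0 d) y := by
  have hA : (Submodule.reflection (ℝ ∙ (x - y))ᗮ) x = y := Submodule.reflection_sub h
  calc 𝓕 ⇑(Psi0 d) x = 𝓕 (⇑(Psi0 d) ∘ (Submodule.reflection (ℝ ∙ (x - y))ᗮ)) x := by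
        refine congrArg (fun g : EuclideanSpace ℝ (Fin d) → ℂ => 𝓕 g x) ?_
        funext v
        exact (Psi0_radial ((Submodule.reflection (ℝ ∙ (x - y))ᗮ).norm_map v)).symm
    _ = 𝓕 ⇑(Psi0 d) ((Submodule.reflection (ℝ ∙ (x - y))ᗮ) x) :=
        Real.fourier_comp_linearIsometry _ _ _
    _ = 𝓕 ⇑(Psi0 d) y := by rw [hA]

lemma conj_fourier (d : ℕ) (w : EuclideanSpace ℝ (Fin d)) :
    (starRingEnd ℂ) (𝓕 ⇑(Psi0 d) w) = 𝓕 ⇑(Psi0 d) (-w) := by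
  rw [Real.fourier_eq', Real.fourier_eq', ← integral_conj]
  congr 1
  funext v
  have hc : (starRingEnd ℂ) ((Psi0 d) v) = (Psi0 d) v := by
    rw [Psi0_apply]; exact Complex.conj_ofReal _
  rw [smul_eq_mul, smul_eq_mul, map_mul, hc, ← Complex.exp_conj]
  congr 2
  rw [map_mul, Complex.conj_I, Complex.conj_ofReal, inner_neg_right]
  push_cast
  ring

lemma Psi_eq (d : ℕ) (x : EuclideanSpace ℝ (Fin d)) : Psi d x = 𝓕 ⇑(Psi0 d) (-x) := by
  have hinv := (Psi d).continuous.fourierInv_fourier_eq ((Psi d).integrable)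
    (by rw [hFT d]; exact (Psi0 d).integrable)
  conv_lhs => rw [← hinv]
  rw [hFT d, Real.fourierInv_eq_fourier_neg]

lemma Psi_real (d : ℕ) (x : EuclideanSpace ℝ (Fin d)) :
    (((Psi d x).re : ℝ) : ℂ) = Psi d x := by
  rw [← Complex.conj_eq_iff_re]
  calc (starRingEnd ℂ) (Psi d x) = (starRingEnd ℂ) (𝓕 ⇑(Psi0 d) (-x)) := by rw [Psi_eq]
    _ = 𝓕 ⇑(Psi0 d) x := by rw [conj_fourier, neg_neg]
    _ = 𝓕 ⇑(Psi0 d) (-x) := fourier_radial d (by simp)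
    _ = Psi d x := (Psi_eq d x).symm

def B : ℂ →L[ℝ] ℝ →L[ℝ] ℝ := (ContinuousLinearMap.mul ℝ ℝ).comp Complex.reCLM

def psi (d : ℕ) : SchwartzMap (EuclideanSpace ℝ (Fin d)) ℝ :=
  SchwartzMap.bilinLeftCLM B (Function.HasTemperateGrowth.const (1:ℝ)) (Psi d)

lemma psi_apply (d : ℕ) (x : EuclideanSpace ℝ (Fin d)) : psi d x = (Psi d x).re := by
  show (Psi d x).re * 1 = _
  ring

lemma psi_complex (d : ℕ) (x : EuclideanSpace ℝ (Fin d)) :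
    ((psi d x : ℝ) : ℂ) = Psi d x := by
  rw [psi_apply]; exact Psi_real d x

lemma psi_fourier (d : ℕ) :
    𝓕 (fun x : EuclideanSpace ℝ (Fin d) => ((psi d x : ℝ) : ℂ)) = ⇑(Psi0 d) := by
  have : (fun x : EuclideanSpace ℝ (Fin d) => ((psi d x : ℝ) : ℂ)) = ⇑(Psi d) :=
    funext fun x => psi_complex d x
  rw [this, hFT d]


end CalderonAux


open CalderonAux in
/-- Lemma 1 of the paper's appendix: for any dimension `d ≥ 1` and any `s ∈ ℕ` there exists a
real-valued Schwartz function `ψ` on `ℝ^d` that is (a) radial, (b) has Fourier transform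
supported in the closed unit ball, (c) has vanishing moments up to order `s`, and (d)
satisfies the Calderón admissibility condition `∫₀^∞ |𝓕ψ(tξ)|² dt/t = 1` for all `ξ ≠ 0`. -/
theorem exists_calderon_function (d : ℕ) (hd : 1 ≤ d) (s : ℕ) :
    ∃ ψ : SchwartzMap (EuclideanSpace ℝ (Fin d)) ℝ,
      -- (a) ψ is radial
      (∀ x y : EuclideanSpace ℝ (Fin d), ‖x‖ = ‖y‖ → ψ x = ψ y) ∧
      -- (b) 𝓕ψ vanishes outside the closed unit ball
      (∀ ξ : EuclideanSpace ℝ (Fin d), 1 ≤ ‖ξ‖ →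
        𝓕 (fun x => (ψ x : ℂ)) ξ = 0) ∧
      -- (c) vanishing moments up to order s
      (∀ β : Fin d → ℕ, (∑ i, β i) ≤ s →
        ∫ x : EuclideanSpace ℝ (Fin d), (∏ i, x i ^ β i) * ψ x = 0) ∧
      -- (d) Calderón admissibility
      (∀ ξ : EuclideanSpace ℝ (Fin d), ξ ≠ 0 →
        ∫ t in Set.Ioi (0 : ℝ), ‖𝓕 (fun x => (ψ x : ℂ)) (t • ξ)‖ ^ 2 / t = 1) := by
  refine ⟨psi d, ?_, ?_, ?_, ?_⟩
  · -- (a) radial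
    intro x y h
    have h' : ‖-x‖ = ‖-y‖ := by simpa using h
    rw [psi_apply, psi_apply, Psi_eq, Psi_eq, fourier_radial d h']
  · -- (b) support of Fourier transform
    intro ξ hξ
    rw [psi_fourier d, Psi0_apply]
    have h2 : (3/4:ℝ) ≤ ‖ξ‖^2 := by nlinarith
    simp [gE, bump_zero_of_ge h2]
  · -- (c) vanishing moments
    intro β hβ
    classical
    set l : List (Fin d) := (List.finRange d).flatMap (fun i => List.replicate (β i) i) with hl
    set n := l.length with hn
    set m : Fin n → EuclideanSpace ℝ (Fin d) :=
      fun j => EuclideanSpace.single (l.get j) 1 with hmdef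
    have hint : ∀ k : ℕ, Integrable (fun v : EuclideanSpace ℝ (Fin d) => ‖v‖^k * ‖(Psi d) v‖) :=
      fun k => (Psi d).integrable_pow_mul volume k
    have hIter := Real.iteratedFDeriv_fourier (f := ⇑(Psi d)) (N := (⊤:ℕ∞))
      (fun k _ => hint k) ((Psi d).continuous.aestronglyMeasurable) (n := n) le_top
    have hzero : iteratedFDeriv ℝ n (𝓕 ⇑(Psi d)) 0 = 0 := by
      rw [hFT d]
      have hev : ⇑(Psi0 d) =ᶠ[nhds (0 : EuclideanSpace ℝ (Fin d))] (fun _ => (0:ℂ)) := by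
        filter_upwards [Metric.ball_mem_nhds (0 : EuclideanSpace ℝ (Fin d))
          (by norm_num : (0:ℝ) < 1/2)] with ξ hξ
        have hn2 : ‖ξ‖ < 1/2 := by simpa [mem_ball_zero_iff] using hξ
        have h4 : ‖ξ‖^2 ≤ 1/4 := by nlinarith [norm_nonneg ξ]
        rw [Psi0_apply]
        simp [gE, bump_zero_of_le h4]
      have hx0 : (Psi0 d) 0 = (fun _ : EuclideanSpace ℝ (Fin d) => (0:ℂ)) 0 := by
        rw [Psi0_apply]
        simp [gE, bump_zero_of_le (by norm_num : (0:ℝ) ≤ 1/4)]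
      calc iteratedFDeriv ℝ n ⇑(Psi0 d) 0
          = iteratedFDeriv ℝ n (fun _ => (0:ℂ)) 0 := by
            rw [← iteratedFDerivWithin_univ, ← iteratedFDerivWithin_univ]
            exact Filter.EventuallyEq.iteratedFDerivWithin_eq
              (hev.filter_mono nhdsWithin_le_nhds) hx0 n
        _ = 0 := by rw [iteratedFDeriv_zero_fun]; rfl
    have hFint : Integrable
        (fun v => VectorFourier.fourierPowSMulRight (innerSL ℝ) ⇑(Psi d) v n) :=
      VectorFourier.integrable_fourierPowSMulRight (innerSL ℝ) (hint n)
        ((Psi d).continuous.aestronglyMeasurable)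
    have hval : 𝓕 (fun v => VectorFourier.fourierPowSMulRight (innerSL ℝ) ⇑(Psi d) v n) 0
        = ∫ v, VectorFourier.fourierPowSMulRight (innerSL ℝ) ⇑(Psi d) v n := by
      rw [Real.fourier_eq]
      simp
    have h0 : (∫ v, VectorFourier.fourierPowSMulRight (innerSL ℝ) ⇑(Psi d) v n) = 0 := by
      rw [← hval, ← hIter]
      exact hzero
    have happ : (∫ v, VectorFourier.fourierPowSMulRight (innerSL ℝ) ⇑(Psi d) v n m) = 0 := by
      rw [← ContinuousMultilinearMap.integral_apply hFint m, h0]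
      rfl
    have hm : ∀ v : EuclideanSpace ℝ (Fin d),
        VectorFourier.fourierPowSMulRight (innerSL ℝ) ⇑(Psi d) v n m
        = (-(2*Real.pi*Complex.I))^n • ((∏ i, v i ^ β i : ℝ) • (Psi d v)) := by
      intro v
      rw [VectorFourier.fourierPowSMulRight_apply]
      have h1 : ∀ j, (innerSL ℝ) v (m j) = v (l.get j) := by
        intro j
        rw [hmdef, innerSL_apply_apply, EuclideanSpace.inner_single_right]
        simp
      have hprod : (∏ j, (innerSL ℝ) v (m j)) = ∏ i, v i ^ β i := by
        rw [Finset.prod_congr rfl (fun j _ => h1 j)]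
        have h2 : ∏ j : Fin n, v (l.get j) = (l.map (fun i => v i)).prod := by
          calc ∏ j : Fin n, v (l.get j) = (List.ofFn (fun j => v (l.get j))).prod :=
                (List.prod_ofFn).symm
            _ = ((List.ofFn l.get).map (fun i => v i)).prod := by rw [List.map_ofFn]; rfl
            _ = (l.map (fun i => v i)).prod := by rw [List.ofFn_get]
        have h3 : ∀ L : List (Fin d),
            ((L.flatMap (fun i => List.replicate (β i) i)).map (fun i => v i)).prod
              = (L.map (fun i => v i ^ β i)).prod := by
          intro L
          induction L with
          | nil => simp
          | cons a L ih => simp [ih, List.prod_replicate]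
        rw [h2, hl, h3, ← Fin.prod_univ_def]
      rw [hprod]
    simp_rw [hm] at happ
    rw [integral_smul] at happ
    have hker : ((-(2*Real.pi*Complex.I))^n : ℂ) ≠ 0 := by
      apply pow_ne_zero
      simp [Real.pi_ne_zero, Complex.I_ne_zero, Complex.ext_iff, Real.pi_ne_zero]
    have hI : (∫ v : EuclideanSpace ℝ (Fin d), ((∏ i, v i ^ β i : ℝ)) • (Psi d v)) = 0 :=
      (smul_eq_zero.mp happ).resolve_left hker
    have hcast : ∀ v : EuclideanSpace ℝ (Fin d),
        ((∏ i, v i ^ β i : ℝ)) • (Psi d v) = ((((∏ i, v i ^ β i) * psi d v : ℝ)) : ℂ) := by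
      intro v
      rw [← psi_complex d v, Complex.real_smul, Complex.ofReal_mul]
    simp_rw [hcast] at hI
    have hI2 := (integral_ofReal (𝕜 := ℂ)
      (f := fun v : EuclideanSpace ℝ (Fin d) => (∏ i, v i ^ β i) * psi d v)
      (μ := volume)).symm.trans hI
    exact RCLike.ofReal_eq_zero.mp hI2
  · -- (d) Calderon condition
    intro ξ hξ
    have ha : 0 < ‖ξ‖ := norm_pos_iff.mpr hξ
    rw [psi_fourier d]
    have hcongr : ∀ t ∈ Set.Ioi (0:ℝ), ‖(Psi0 d) (t • ξ)‖^2 / t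
        = (((Real.sqrt c0)⁻¹)^2 * ‖ξ‖) * Fc (‖ξ‖ * t) := by
      intro t ht
      have ht0 : (0:ℝ) < t := ht
      have h1 : ‖t • ξ‖^2 = (‖ξ‖*t)^2 := by
        rw [norm_smul, Real.norm_eq_abs, abs_of_pos ht0]; ring
      rw [Psi0_apply, gE, h1, Complex.norm_real, Real.norm_eq_abs, sq_abs, mul_pow,
        mul_div_assoc, keyEq ha ht0]
      ring
    rw [setIntegral_congr_fun measurableSet_Ioi hcongr, integral_const_mul,
      integral_comp_mul_left_Ioi Fc 0 ha, mul_zero, smul_eq_mul, ← c0]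
    have hb : ((Real.sqrt c0)⁻¹)^2 = c0⁻¹ := by
      rw [inv_pow, Real.sq_sqrt c0_pos.le]
    rw [hb]
    field_simp
    exact div_self c0_pos.ne'
end
end

section
/- Let d ≥ 1, let u be a Schwartz function on ℝ^d, let m ≥ 1 be an integer, and let h := Δ^m u be the m-fold iterated Laplacian of u. Then for every multi-index β = (β₁,…,β_d) with |β| := Σᵢ βᵢ ≤ 2m − 1, one has ∫_{ℝ^d} x^β h(x) dx = 0, where x^β := x₁^{β₁}⋯x_d^{β_d}. -/
open MeasureTheory

/-- The Laplacian of a function on `ℝ^d`, as the sum of its second partial derivatives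
along the standard coordinate directions. -/
noncomputable def laplacian {d : ℕ} (F : EuclideanSpace ℝ (Fin d) → ℝ)
    (x : EuclideanSpace ℝ (Fin d)) : ℝ :=
  ∑ i : Fin d,
    fderiv ℝ (fun y => fderiv ℝ F y (EuclideanSpace.single i 1)) x
      (EuclideanSpace.single i 1)



variable {d : ℕ}

noncomputable def pderivCLM' {E : Type*} [NormedAddCommGroup E] [NormedSpace ℝ E] (m : E) :
    SchwartzMap E ℝ →L[ℝ] SchwartzMap E ℝ :=
  LineDeriv.lineDerivOpCLM ℝ (SchwartzMap E ℝ) m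

lemma pderivCLM'_apply {E : Type*} [NormedAddCommGroup E] [NormedSpace ℝ E] (m : E)
    (f : SchwartzMap E ℝ) (x : E) : pderivCLM' m f x = fderiv ℝ f x m := rfl


noncomputable def Pm (β : Fin d → ℕ) (x : EuclideanSpace ℝ (Fin d)) : ℝ := ∏ i, x i ^ β i

noncomputable def PmD (β : Fin d → ℕ) (x : EuclideanSpace ℝ (Fin d)) :
    EuclideanSpace ℝ (Fin d) →L[ℝ] ℝ :=
  ∑ i, (∏ j ∈ Finset.univ.erase i, x j ^ β j) •
    (((β i : ℝ) * x i ^ (β i - 1)) • (EuclideanSpace.proj i : EuclideanSpace ℝ (Fin d) →L[ℝ] ℝ))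

lemma hasFDerivAt_Pm (β : Fin d → ℕ) (x : EuclideanSpace ℝ (Fin d)) :
    HasFDerivAt (Pm β) (PmD β x) x := by
  have hfac : ∀ i : Fin d, HasFDerivAt (fun y : EuclideanSpace ℝ (Fin d) => y i ^ β i)
      (((β i : ℝ) * x i ^ (β i - 1)) • (EuclideanSpace.proj i : EuclideanSpace ℝ (Fin d) →L[ℝ] ℝ)) x := by
    intro i
    have h1 : HasDerivAt (fun y : ℝ => y ^ β i) ((β i : ℝ) * x i ^ (β i - 1)) (x i) :=
      hasDerivAt_pow (β i) (x i)
    have h2 : HasFDerivAt (fun y : EuclideanSpace ℝ (Fin d) => y i)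
        (EuclideanSpace.proj i : EuclideanSpace ℝ (Fin d) →L[ℝ] ℝ) x :=
      (EuclideanSpace.proj i : EuclideanSpace ℝ (Fin d) →L[ℝ] ℝ).hasFDerivAt
    exact h1.comp_hasFDerivAt x h2
  exact HasFDerivAt.finset_prod (u := Finset.univ) (fun i _ => hfac i)

lemma differentiable_Pm (β : Fin d → ℕ) : Differentiable ℝ (Pm β) :=
  fun x => (hasFDerivAt_Pm β x).differentiableAt

lemma Pm_update (β : Fin d → ℕ) (k : Fin d) (n : ℕ) (x : EuclideanSpace ℝ (Fin d)) :
    Pm (Function.update β k n) x = x k ^ n * ∏ j ∈ Finset.univ.erase k, x j ^ β j := by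
  rw [Pm, ← Finset.mul_prod_erase _ _ (Finset.mem_univ k)]
  rw [Function.update_self]
  congr 1
  exact Finset.prod_congr rfl fun j hj => by
    rw [Function.update_of_ne (Finset.mem_erase.mp hj).1]

lemma fderiv_Pm_single (β : Fin d → ℕ) (x : EuclideanSpace ℝ (Fin d)) (k : Fin d) :
    fderiv ℝ (Pm β) x (EuclideanSpace.single k 1)
      = (β k : ℝ) * Pm (Function.update β k (β k - 1)) x := by
  rw [(hasFDerivAt_Pm β x).fderiv, PmD]
  rw [ContinuousLinearMap.sum_apply]
  rw [Finset.sum_eq_single k]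
  · simp [Pm_update]
    ring
  · intro i _ hik
    simp [EuclideanSpace.single_apply, hik]
  · simp

lemma abs_apply_le_norm (x : EuclideanSpace ℝ (Fin d)) (i : Fin d) : |x i| ≤ ‖x‖ := by
  rw [EuclideanSpace.norm_eq]
  rw [show |x i| = Real.sqrt (‖x i‖ ^ 2) by rw [Real.sqrt_sq_eq_abs, Real.norm_eq_abs, abs_abs]]
  apply Real.sqrt_le_sqrt
  exact Finset.single_le_sum (f := fun j => ‖x j‖ ^ 2) (fun j _ => sq_nonneg _) (Finset.mem_univ i)

lemma abs_Pm_le (β : Fin d → ℕ) (x : EuclideanSpace ℝ (Fin d)) :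
    |Pm β x| ≤ ‖x‖ ^ (∑ i, β i) := by
  rw [Pm, Finset.abs_prod, ← Finset.prod_pow_eq_pow_sum]
  apply Finset.prod_le_prod (fun i _ => abs_nonneg _)
  intro i _
  rw [abs_pow]
  exact pow_le_pow_left₀ (abs_nonneg _) (abs_apply_le_norm x i) _

lemma integrable_Pm_mul (β : Fin d → ℕ)
    (g : SchwartzMap (EuclideanSpace ℝ (Fin d)) ℝ) :
    Integrable (fun x => Pm β x * g x) := by
  apply (g.integrable_pow_mul volume (∑ i, β i)).mono
  · exact ((differentiable_Pm β).continuous.mul g.continuous).aestronglyMeasurable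
  · filter_upwards with x
    rw [norm_mul, Real.norm_eq_abs (_ * _), abs_of_nonneg (by positivity)]
    have := abs_Pm_le β x
    have h2 : ‖Pm β x‖ ≤ ‖x‖ ^ (∑ i, β i) := by rwa [Real.norm_eq_abs]
    exact mul_le_mul_of_nonneg_right h2 (norm_nonneg (g x))

lemma ibp (β : Fin d → ℕ) (i : Fin d) (g : SchwartzMap (EuclideanSpace ℝ (Fin d)) ℝ) :
    ∫ x : EuclideanSpace ℝ (Fin d), Pm β x * fderiv ℝ ⇑g x (EuclideanSpace.single i 1)
      = -((β i : ℝ) *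
        ∫ x : EuclideanSpace ℝ (Fin d), Pm (Function.update β i (β i - 1)) x * g x) := by
  have hfg' : Integrable (fun x : EuclideanSpace ℝ (Fin d) =>
      Pm β x * fderiv ℝ (⇑g) x (EuclideanSpace.single i 1)) := by
    simp only [← pderivCLM'_apply (EuclideanSpace.single i 1) g]
    exact integrable_Pm_mul β _
  have hf'g : Integrable (fun x : EuclideanSpace ℝ (Fin d) =>
      fderiv ℝ (Pm β) x (EuclideanSpace.single i 1) * g x) := by
    simp only [fderiv_Pm_single, mul_assoc]
    exact (integrable_Pm_mul (Function.update β i (β i - 1)) g).const_mul _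
  have key := integral_mul_fderiv_eq_neg_fderiv_mul_of_integrable (μ := volume)
    hf'g hfg' (integrable_Pm_mul β g) (fun x _ => differentiable_Pm β x) (fun x _ => g.differentiableAt)
  rw [key]
  congr 1
  simp only [fderiv_Pm_single, mul_assoc]
  exact MeasureTheory.integral_const_mul _ _

noncomputable def pd (i : Fin d) :
    SchwartzMap (EuclideanSpace ℝ (Fin d)) ℝ →L[ℝ] SchwartzMap (EuclideanSpace ℝ (Fin d)) ℝ :=
  pderivCLM' (EuclideanSpace.single i 1)

noncomputable def lapS (f : SchwartzMap (EuclideanSpace ℝ (Fin d)) ℝ) :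
    SchwartzMap (EuclideanSpace ℝ (Fin d)) ℝ :=
  ∑ i : Fin d, pd i (pd i f)

lemma lapS_apply (f : SchwartzMap (EuclideanSpace ℝ (Fin d)) ℝ) (x : EuclideanSpace ℝ (Fin d)) :
    (lapS f) x = ∑ i : Fin d, (pd i (pd i f)) x := by
  rw [lapS]
  have h := map_sum (FunLike.coeAddMonoidHom (SchwartzMap (EuclideanSpace ℝ (Fin d)) ℝ) (EuclideanSpace ℝ (Fin d)) ℝ)
    (fun i : Fin d => pd i (pd i f)) Finset.univ
  rw [FunLike.coe_coeAddMonoidHom] at h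
  rw [show (⇑(∑ i : Fin d, pd i (pd i f)) : _) = _ from h]
  exact Finset.sum_apply x Finset.univ _

lemma lapS_coe (f : SchwartzMap (EuclideanSpace ℝ (Fin d)) ℝ) :
    ⇑(lapS f) = laplacian ⇑f := by
  funext x
  have hx : ∀ e : EuclideanSpace ℝ (Fin d),
      (fun y => fderiv ℝ (⇑f) y e) = ⇑(pderivCLM' e f) :=
    fun e => funext fun y => (pderivCLM'_apply e f y).symm
  rw [laplacian, lapS_apply]
  refine Finset.sum_congr rfl fun i _ => ?_
  rw [pd, pderivCLM'_apply, hx]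

lemma iterate_lap_coe (m : ℕ) (f : SchwartzMap (EuclideanSpace ℝ (Fin d)) ℝ) :
    laplacian^[m] ⇑f = ⇑(lapS^[m] f) := by
  induction m with
  | zero => rfl
  | succ n ih =>
    rw [Function.iterate_succ_apply', Function.iterate_succ_apply', ih, lapS_coe]

lemma key_vanish (m : ℕ) (v : SchwartzMap (EuclideanSpace ℝ (Fin d)) ℝ) :
    ∀ β : Fin d → ℕ, (∑ i, β i) + 1 ≤ 2 * m →
      ∫ x : EuclideanSpace ℝ (Fin d), Pm β x * (laplacian^[m] ⇑v) x = 0 := by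
  induction m with
  | zero => intro β hβ; omega
  | succ n ih =>
    intro β hβ
    set g := lapS^[n] v with hgdef
    have hco : laplacian^[n+1] ⇑v = ⇑(lapS g) := by
      rw [Function.iterate_succ_apply', iterate_lap_coe, ← lapS_coe]
    rw [hco]
    have hsum := lapS_apply g
    have hint : ∫ x : EuclideanSpace ℝ (Fin d), Pm β x * (lapS g) x
        = ∑ i : Fin d, ∫ x : EuclideanSpace ℝ (Fin d), Pm β x * (pd i (pd i g)) x := by
      rw [← integral_finset_sum _ (fun i _ => integrable_Pm_mul β (pd i (pd i g)))]
      congr 1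
      funext x
      rw [hsum, Finset.mul_sum]
    rw [hint]
    apply Finset.sum_eq_zero
    intro i _
    set β1 := Function.update β i (β i - 1) with hβ1
    set β2 := Function.update β1 i (β1 i - 1) with hβ2
    have e1 := ibp β i (pd i g)
    have e2 := ibp β1 i g
    have c1 : ∫ x : EuclideanSpace ℝ (Fin d), Pm β x * (pd i (pd i g)) x
        = -((β i : ℝ) * ∫ x : EuclideanSpace ℝ (Fin d), Pm β1 x * (pd i g) x) := by
      rw [← e1]
      congr 1
    have c2 : ∫ x : EuclideanSpace ℝ (Fin d), Pm β1 x * (pd i g) x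
        = -((β1 i : ℝ) * ∫ x : EuclideanSpace ℝ (Fin d), Pm β2 x * g x) := by
      rw [← e2]
      congr 1
    rw [c1, c2]
    rw [show -((β i : ℝ) * -((β1 i : ℝ) * ∫ x : EuclideanSpace ℝ (Fin d), Pm β2 x * g x))
        = ((β i : ℝ) * (β1 i : ℝ)) * ∫ x : EuclideanSpace ℝ (Fin d), Pm β2 x * g x by ring]
    have hβ1i : β1 i = β i - 1 := by rw [hβ1, Function.update_self]
    rcases Nat.lt_or_ge (β i) 2 with hlt | hge
    · have : (β i : ℝ) * (β1 i : ℝ) = 0 := by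
        rw [hβ1i]
        interval_cases h : β i <;> simp
      rw [this, zero_mul]
    · have hg2 : ⇑g = laplacian^[n] ⇑v := (iterate_lap_coe n v).symm
      have hs1 : ∑ j, β1 j = (β i - 1) + ∑ j ∈ Finset.univ.erase i, β j := by
        rw [hβ1, Finset.sum_update_of_mem (Finset.mem_univ i), Finset.sdiff_singleton_eq_erase]
      have hs0 : ∑ j, β j = β i + ∑ j ∈ Finset.univ.erase i, β j := by
        rw [Finset.add_sum_erase _ _ (Finset.mem_univ i)]
      have hs2 : ∑ j, β2 j = (β1 i - 1) + ∑ j ∈ Finset.univ.erase i, β1 j := by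
        rw [hβ2, Finset.sum_update_of_mem (Finset.mem_univ i), Finset.sdiff_singleton_eq_erase]
      have hs1e : ∑ j ∈ Finset.univ.erase i, β1 j = ∑ j ∈ Finset.univ.erase i, β j := by
        refine Finset.sum_congr rfl fun j hj => ?_
        rw [hβ1, Function.update_of_ne (Finset.mem_erase.mp hj).1]
      have : ∑ j, β2 j + 1 ≤ 2 * n := by
        rw [hs2, hs1e, hβ1i]
        omega
      rw [hg2, ih β2 this, mul_zero]

/-- The vanishing-moments claim inside the proof of Lemma 1 of the paper's appendix: if `u` is
a Schwartz function on `ℝ^d` and `h = Δ^m u` is its `m`-fold iterated Laplacian, then all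
moments of `h` of order at most `2m − 1` vanish: `∫ x^β h(x) dx = 0` for `|β| ≤ 2m − 1`. -/
theorem iterated_laplacian_moments_vanish
    (d : ℕ) (hd : 1 ≤ d)
    (u : SchwartzMap (EuclideanSpace ℝ (Fin d)) ℝ)
    (m : ℕ) (hm : 1 ≤ m)
    (h : EuclideanSpace ℝ (Fin d) → ℝ) (hh : h = laplacian^[m] ⇑u) :
    ∀ β : Fin d → ℕ, (∑ i, β i) ≤ 2 * m - 1 →
      ∫ x : EuclideanSpace ℝ (Fin d), (∏ i, x i ^ β i) * h x = 0 := by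
  intro β hβ
  subst hh
  exact key_vanish m u β (by omega)
end
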